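/- arXiv:1802.09372 — 2 statements merged into one kernel-verified Lean document; each statement's English description precedes it below -/
import Mathlib

section
/- For every m ≥ 0: d_{pm} = m·Δ_{p−2} + d_m, and for every k with 0 < k < p: d_{pm+k} = m·Δ_{p−2} + Δ_{k−2} + d_m + min{k−1, d_{m+1} − d_m}. -/
open MeasureTheory
open scoped NNReal ENNReal

namespace Chacon

/-- The space of digit sequences with digits in `{0, …, p-1}`. -/
def Gamma (p : ℕ) : Set (ℕ → ℕ) := {x | ∀ i, x i < p}

/-- `Γ*`: sequences with digits `< p` having infinitely many coordinates `≠ p - 1`. -/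
def GammaStar (p : ℕ) : Set (ℕ → ℕ) :=
  {x | (∀ i, x i < p) ∧ {i | x i ≠ p - 1}.Infinite}

/-- The least index `i` with `x i ≠ p - 1`. -/
noncomputable def firstNot (p : ℕ) (x : ℕ → ℕ) : ℕ :=
  sInf {i | x i ≠ p - 1}

/-- `φ(x) = x_i` where `i` is the least index with `x_i ≠ p - 1`. -/
noncomputable def phi (p : ℕ) (x : ℕ → ℕ) : ℕ :=
  x (firstNot p x)

/-- The odometer `S` (addition of `1` with carry): the initial run of digits
`p - 1` is replaced by zeros, and the first digit `≠ p - 1` is increased by one. -/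
noncomputable def odo (p : ℕ) (x : ℕ → ℕ) : ℕ → ℕ :=
  fun i =>
    if i < firstNot p x then 0
    else if i = firstNot p x then x i + 1
    else x i

/-- `φ^(m)(x) = ∑_{j=0}^{m-1} φ(S^j x)`. -/
noncomputable def phiSum (p m : ℕ) (x : ℕ → ℕ) : ℕ :=
  ∑ j ∈ Finset.range m, phi p ((odo p)^[j] x)

/-- The base-`p` digit sequence of a real number `u`. -/
noncomputable def digitsOf (p : ℕ) (u : ℝ) : ℕ → ℕ :=
  fun i => (⌊u * (p : ℝ) ^ (i + 1)⌋).toNat % p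

/-- `λ`: the product probability measure on digit sequences under which the
coordinates are i.i.d., uniformly distributed in `{0, …, p-1}`; it is realized
concretely as the distribution of the base-`p` digit sequence of a uniformly
distributed random point of `[0,1)`. -/
noncomputable def lam (p : ℕ) : Measure (ℕ → ℕ) :=
  Measure.map (digitsOf p) (volume.restrict (Set.Ico (0 : ℝ) 1))

/-- `π_m(j) = λ({x : φ^(m)(x) = j})`. -/
noncomputable def pim (p m j : ℕ) : ℝ≥0∞ :=
  lam p {x | phiSum p m x = j}

/-- `P_m^p(t) = ∑_{j ≥ 0} π_m(j) t^j`, a real polynomial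
(the sum is over `0 ≤ j ≤ m (p-2)` since `0 ≤ φ^(m) ≤ m (p-2)` a.s.). -/
noncomputable def P (p m : ℕ) (t : ℝ) : ℝ :=
  ∑ j ∈ Finset.range (m * (p - 2) + 1), (pim p m j).toReal * t ^ j

/-- The `n`-th triangular number `Δ_n = n (n+1) / 2`. -/
def tri (n : ℕ) : ℕ := n * (n + 1) / 2

/-- The degree `D_m` of `P_m^p`: the largest `j` with `π_m(j) ≠ 0`. -/
noncomputable def D (p m : ℕ) : ℕ := sSup {j | pim p m j ≠ 0}

/-- The lower degree `d_m` of `P_m^p`: the least `j` with `π_m(j) ≠ 0`. -/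
noncomputable def d (p m : ℕ) : ℕ := sInf {j | pim p m j ≠ 0}




/-- first base-p digit of `n` that is not `p-1`. -/
def fDig (p : ℕ) (n : ℕ) : ℕ :=
  if h : 2 ≤ p ∧ n % p = p - 1 then fDig p (n / p) else n % p
termination_by n
decreasing_by
  have hp := h.1
  have h2 := h.2
  have hn : n ≠ 0 := by
    intro e; subst e; simp at h2; omega
  exact Nat.div_lt_self (Nat.pos_of_ne_zero hn) (by omega)

lemma fDig_of_ne {p n : ℕ} (h : n % p ≠ p - 1) : fDig p n = n % p := by
  rw [fDig, dif_neg]; tauto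

lemma fDig_of_eq {p n : ℕ} (hp : 2 ≤ p) (h : n % p = p - 1) :
    fDig p n = fDig p (n / p) := by
  rw [fDig, dif_pos ⟨hp, h⟩]

def F (p n m : ℕ) : ℕ := ∑ j ∈ Finset.range m, fDig p (n + j)

noncomputable def dd (p m : ℕ) : ℕ := sInf (Set.range fun n => F p n m)

lemma sum_range_id_eq_tri (t : ℕ) : ∑ i ∈ Finset.range t, i = tri (t - 1) := by
  have h2 : (∑ i ∈ Finset.range t, i) * 2 = t * (t - 1) := Finset.sum_range_id_mul_two t
  have h3 : tri (t - 1) * 2 = t * (t - 1) := by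
    rcases t with _ | t
    · simp [tri]
    · simp only [Nat.succ_sub_one, tri]
      have := Nat.even_mul_succ_self t
      rw [Nat.div_mul_cancel this.two_dvd]
      ring
  omega

lemma tri_succ (n : ℕ) : tri (n + 1) = tri n + (n + 1) := by
  have h1 := sum_range_id_eq_tri (n + 2)
  have h2 := sum_range_id_eq_tri (n + 1)
  rw [Finset.sum_range_succ] at h1
  simp at h1 h2
  omega

lemma F_succ (p n m : ℕ) : F p n (m + 1) = F p n m + fDig p (n + m) :=
  Finset.sum_range_succ _ _

lemma fDig_step {p : ℕ} (hp : 2 ≤ p) (q b : ℕ) (hb : b < p) :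
    fDig p (p * q + b) = if b = p - 1 then fDig p q else b := by
  have hmod : (p * q + b) % p = b := by
    rw [Nat.mul_add_mod, Nat.mod_eq_of_lt hb]
  split_ifs with hb'
  · rw [fDig_of_eq hp (by rw [hmod, hb'])]
    congr 1
    rw [Nat.mul_add_div (by omega), Nat.div_eq_of_lt hb, Nat.add_zero]
  · rw [fDig_of_ne (by rw [hmod]; exact hb'), hmod]

lemma block_eq {p : ℕ} (hp : 2 ≤ p) (q r k : ℕ) (hr : r < p) (hk1 : 0 < k)
    (hkp : k ≤ p) (hrk : p ≤ r + k) :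
    ∑ j ∈ Finset.range k, fDig p (p * q + r + j)
      = (∑ j ∈ Finset.range (p - 1 - r), (r + j)) + fDig p q
        + ∑ i ∈ Finset.range (r + k - p), i := by
  have hk : k = (p - 1 - r + 1) + (r + k - p) := by omega
  conv_lhs => rw [hk, Finset.sum_range_add, Finset.sum_range_succ]
  have t1 : ∀ j ∈ Finset.range (p - 1 - r), fDig p (p * q + r + j) = r + j := by
    intro j hj
    have hj' := Finset.mem_range.mp hj
    have e : p * q + r + j = p * q + (r + j) := by omega
    rw [e, fDig_step hp q _ (by omega), if_neg (by omega)]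
  have t2 : fDig p (p * q + r + (p - 1 - r)) = fDig p q := by
    have e : p * q + r + (p - 1 - r) = p * q + (p - 1) := by omega
    rw [e, fDig_step hp q _ (by omega), if_pos rfl]
  have t3 : ∀ i ∈ Finset.range (r + k - p),
      fDig p (p * q + r + (p - 1 - r + 1 + i)) = i := by
    intro i hi
    have hi' := Finset.mem_range.mp hi
    have hpq : p * (q + 1) = p * q + p := by ring
    have e : p * q + r + (p - 1 - r + 1 + i) = p * (q + 1) + i := by omega
    rw [e, fDig_step hp (q + 1) _ (by omega), if_neg (by omega)]
  rw [Finset.sum_congr rfl t1, t2, Finset.sum_congr rfl t3]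

lemma block_easy {p : ℕ} (hp : 2 ≤ p) (q r k : ℕ) (h : r + k ≤ p - 1) :
    ∑ j ∈ Finset.range k, fDig p (p * q + r + j)
      = ∑ j ∈ Finset.range k, (r + j) := by
  refine Finset.sum_congr rfl fun j hj => ?_
  have hj' := Finset.mem_range.mp hj
  have e : p * q + r + j = p * q + (r + j) := by omega
  rw [e, fDig_step hp q _ (by omega), if_neg (by omega)]

lemma block_full {p : ℕ} (hp : 2 ≤ p) (q r : ℕ) (hr : r < p) :
    ∑ j ∈ Finset.range p, fDig p (p * q + r + j) = tri (p - 2) + fDig p q := by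
  rw [block_eq hp q r p hr (by omega) le_rfl (by omega)]
  have hc : r + p - p = r := by omega
  rw [hc]
  have hsplit : ∑ i ∈ Finset.range (r + (p - 1 - r)), i
      = (∑ i ∈ Finset.range r, i) + ∑ j ∈ Finset.range (p - 1 - r), (r + j) :=
    Finset.sum_range_add _ _ _
  have he : r + (p - 1 - r) = p - 1 := by omega
  rw [he, sum_range_id_eq_tri (p - 1)] at hsplit
  have hp2 : p - 1 - 1 = p - 2 := by omega
  rw [hp2] at hsplit
  omega

lemma div_decomp (p n : ℕ) (hp : 0 < p) : p * (n / p) + n % p = n := Nat.div_add_mod n p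

lemma F_add (p n A B : ℕ) :
    F p n (A + B) = F p n A + ∑ j ∈ Finset.range B, fDig p (n + A + j) := by
  unfold F
  rw [Finset.sum_range_add]
  congr 1
  exact Finset.sum_congr rfl fun j _ => by rw [show n + (A + j) = n + A + j by omega]

lemma F_mul {p : ℕ} (hp : 2 ≤ p) (n m : ℕ) :
    F p n (p * m) = m * tri (p - 2) + F p (n / p) m := by
  induction m with
  | zero => simp [F]
  | succ m ih =>
    have h1 : p * (m + 1) = p * m + p := by ring
    rw [h1, F_add, ih]
    have e : ∀ j : ℕ, n + p * m + j = p * (n / p + m) + n % p + j := by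
      intro j
      have h2 := Nat.div_add_mod n p
      have h3 : p * (n / p + m) = p * (n / p) + p * m := by ring
      omega
    simp only [e]
    rw [block_full hp _ _ (Nat.mod_lt _ (by omega)), F_succ]
    have h4 : (m + 1) * tri (p - 2) = m * tri (p - 2) + tri (p - 2) := by ring
    omega

lemma F_split {p : ℕ} (hp : 2 ≤ p) (n m k : ℕ) :
    F p n (p * m + k) = m * tri (p - 2) + F p (n / p) m
      + ∑ j ∈ Finset.range k, fDig p (p * (n / p + m) + n % p + j) := by
  rw [F_add, F_mul hp]
  have e : ∀ j : ℕ, n + p * m + j = p * (n / p + m) + n % p + j := by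
    intro j
    have h2 := Nat.div_add_mod n p
    have h3 : p * (n / p + m) = p * (n / p) + p * m := by ring
    omega
  simp only [e]

lemma dd_le {p : ℕ} (n m : ℕ) : dd p m ≤ F p n m := Nat.sInf_le ⟨n, rfl⟩

lemma dd_attained (p m : ℕ) : ∃ n, F p n m = dd p m := by
  have h : (Set.range fun n => F p n m).Nonempty := ⟨F p 0 m, 0, rfl⟩
  exact Nat.sInf_mem h

lemma dd_mono (p m : ℕ) : dd p m ≤ dd p (m + 1) := by
  obtain ⟨n, hn⟩ := dd_attained p (m + 1)
  calc dd p m ≤ F p n m := dd_le n m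
    _ ≤ F p n (m + 1) := by rw [F_succ]; omega
    _ = dd p (m + 1) := hn

lemma dd_mul {p : ℕ} (hp : 2 ≤ p) (m : ℕ) :
    dd p (p * m) = m * tri (p - 2) + dd p m := by
  apply le_antisymm
  · obtain ⟨n0, hn0⟩ := dd_attained p m
    calc dd p (p * m) ≤ F p (p * n0) (p * m) := dd_le _ _
      _ = m * tri (p - 2) + dd p m := by
          rw [F_mul hp, Nat.mul_div_cancel_left _ (by omega : 0 < p), hn0]
  · obtain ⟨n, hn⟩ := dd_attained p (p * m)
    rw [← hn, F_mul hp]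
    exact Nat.add_le_add_left (dd_le _ _) _

lemma dd_partial {p : ℕ} (hp : 2 ≤ p) (m k : ℕ) (hk : 0 < k) (hkp : k < p) :
    dd p (p * m + k)
      = m * tri (p - 2) + min (dd p m + tri (k - 1)) (dd p (m + 1) + tri (k - 2)) := by
  have hppos : 0 < p := by omega
  apply le_antisymm
  · -- two witnesses
    have w1 : dd p (p * m + k) ≤ m * tri (p - 2) + (dd p m + tri (k - 1)) := by
      obtain ⟨n0, hn0⟩ := dd_attained p m
      have h := F_split hp (p * n0) m k
      rw [Nat.mul_div_cancel_left _ hppos, Nat.mul_mod_right] at h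
      have hblock : ∑ j ∈ Finset.range k, fDig p (p * (n0 + m) + 0 + j)
          = ∑ j ∈ Finset.range k, (0 + j) := block_easy hp _ _ _ (by omega)
      simp only [Nat.zero_add] at hblock
      rw [hblock, sum_range_id_eq_tri, hn0] at h
      calc dd p (p * m + k) ≤ F p (p * n0) (p * m + k) := dd_le _ _
        _ = _ := by rw [h]; ring
    have w2 : dd p (p * m + k) ≤ m * tri (p - 2) + (dd p (m + 1) + tri (k - 2)) := by
      obtain ⟨n1, hn1⟩ := dd_attained p (m + 1)
      set n := p * n1 + (p - 1) with hndef
      have hnmod : n % p = p - 1 := by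
        rw [hndef, Nat.mul_add_mod, Nat.mod_eq_of_lt (by omega)]
      have hndiv : n / p = n1 := by
        rw [hndef, Nat.mul_add_div hppos, Nat.div_eq_of_lt (by omega), Nat.add_zero]
      have h := F_split hp n m k
      rw [hnmod, hndiv] at h
      have hblock := block_eq hp (n1 + m) (p - 1) k (by omega) hk (le_of_lt hkp)
        (by omega)
      have hs0 : p - 1 - (p - 1) = 0 := by omega
      rw [hs0] at hblock
      simp only [Finset.range_zero, Finset.sum_empty, Nat.zero_add] at hblock
      rw [sum_range_id_eq_tri] at hblock
      have hctri : p - 1 + k - p - 1 = k - 2 := by omega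
      rw [hctri] at hblock
      rw [hblock] at h
      calc dd p (p * m + k) ≤ F p n (p * m + k) := dd_le _ _
        _ = _ := by
            rw [h]
            have : F p n1 m + fDig p (n1 + m) = F p n1 (m + 1) := (F_succ _ _ _).symm
            omega
    omega
  · obtain ⟨n, hn⟩ := dd_attained p (p * m + k)
    rw [← hn, F_split hp n m k]
    have hrp : n % p < p := Nat.mod_lt _ hppos
    have hFm : dd p m ≤ F p (n / p) m := dd_le _ _
    rcases le_or_gt (n % p + k) (p - 1) with hcase | hcase
    · have hblock : ∑ j ∈ Finset.range k, fDig p (p * (n / p + m) + n % p + j)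
          = ∑ j ∈ Finset.range k, (n % p + j) := block_easy hp _ _ _ hcase
      have hge : tri (k - 1) ≤ ∑ j ∈ Finset.range k, (n % p + j) := by
        rw [← sum_range_id_eq_tri k]
        exact Finset.sum_le_sum fun j _ => Nat.le_add_left j _
      rw [hblock]
      omega
    · have hblock := block_eq hp (n / p + m) (n % p) k hrp hk (le_of_lt hkp) (by omega)
      rw [hblock]
      have h1 : ∑ j ∈ Finset.range (p - 1 - n % p), (n % p + k - p + j)
          ≤ ∑ j ∈ Finset.range (p - 1 - n % p), (n % p + j) :=
        Finset.sum_le_sum fun j _ => by omega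
      have h2 : (∑ i ∈ Finset.range (n % p + k - p), i)
          + ∑ j ∈ Finset.range (p - 1 - n % p), (n % p + k - p + j)
          = tri (k - 2) := by
        rw [← Finset.sum_range_add]
        have e : n % p + k - p + (p - 1 - n % p) = k - 1 := by omega
        rw [e, sum_range_id_eq_tri]
        simp only [show k - 1 - 1 = k - 2 from by omega]
      have h3 : F p (n / p) m + fDig p (n / p + m) = F p (n / p) (m + 1) :=
        (F_succ _ _ _).symm
      have h4 : dd p (m + 1) ≤ F p (n / p) (m + 1) := dd_le _ _
      omega


----------------------------------------------------------------
-- valL and odометр locality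
----------------------------------------------------------------

def valL (p : ℕ) (x : ℕ → ℕ) (L : ℕ) : ℕ := ∑ i ∈ Finset.range L, x i * p ^ i

lemma valL_succ (p : ℕ) (x : ℕ → ℕ) (L : ℕ) :
    valL p x (L + 1) = valL p x L + x L * p ^ L := Finset.sum_range_succ _ _

lemma valL_all_max {p : ℕ} (hp : 1 ≤ p) (x : ℕ → ℕ) :
    ∀ L, (∀ i < L, x i = p - 1) → valL p x L = p ^ L - 1 := by
  intro L
  induction L with
  | zero => intro _; simp [valL]
  | succ L ih =>
    intro h
    rw [valL_succ, ih (fun i hi => h i (by omega)), h L (by omega)]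
    have h1 : (p - 1) * p ^ L + 1 * p ^ L = p * p ^ L := by
      rw [← Nat.add_mul]; congr 1; omega
    have h2 : p ^ (L + 1) = p * p ^ L := by rw [pow_succ]; ring
    have h3 : 0 < p ^ L := pow_pos (by omega) L
    omega

lemma valL_lt {p : ℕ} (hp : 1 ≤ p) (x : ℕ → ℕ) :
    ∀ L, (∀ i < L, x i < p) → valL p x L < p ^ L := by
  intro L
  induction L with
  | zero => intro _; simp [valL]
  | succ L ih =>
    intro h
    rw [valL_succ]
    have h1 : (x L + 1) * p ^ L ≤ p * p ^ L :=
      Nat.mul_le_mul_right _ (h L (by omega))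
    have h2 : (x L + 1) * p ^ L = x L * p ^ L + p ^ L := by ring
    have h3 : p ^ (L + 1) = p * p ^ L := by rw [pow_succ]; ring
    have h4 := ih (fun i hi => h i (by omega))
    omega

lemma valL_small {p : ℕ} (hp : 2 ≤ p) (x : ℕ → ℕ) (i : ℕ) :
    ∀ L, (∀ j < L, x j < p) → i < L → x i ≠ p - 1 → valL p x L + p ^ i < p ^ L := by
  intro L
  induction L with
  | zero => intro _ hi; omega
  | succ L ih =>
    intro hx hi hd
    rw [valL_succ]
    have h3 : p ^ (L + 1) = p * p ^ L := by rw [pow_succ]; ring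
    rcases Nat.lt_or_ge i L with hiL | hiL
    · have h4 := ih (fun j hj => hx j (by omega)) hiL hd
      have h1 : (x L + 1) * p ^ L ≤ p * p ^ L :=
        Nat.mul_le_mul_right _ (hx L (by omega))
      have h2 : (x L + 1) * p ^ L = x L * p ^ L + p ^ L := by ring
      omega
    · have hiL' : i = L := by omega
      subst hiL'
      have h4 : x i < p := hx i (by omega)
      have h5 : x i + 2 ≤ p := by omega
      have h1 : (x i + 2) * p ^ i ≤ p * p ^ i :=
        Nat.mul_le_mul_right _ h5
      have h2 : (x i + 2) * p ^ i = x i * p ^ i + 2 * p ^ i := by ring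
      have h6 := valL_lt (by omega : 1 ≤ p) x i (fun j hj => hx j (by omega))
      omega

lemma exists_digit_lt {p : ℕ} (hp : 1 ≤ p) (x : ℕ → ℕ) (L : ℕ)
    (hx : ∀ i < L, x i < p) (hv : valL p x L + 1 < p ^ L) :
    ∃ i, i < L ∧ x i ≠ p - 1 := by
  by_contra h
  push_neg at h
  have := valL_all_max hp x L (fun i hi => h i hi)
  have h3 : 0 < p ^ L := pow_pos (by omega) L
  omega

lemma firstNot_lt_of {p : ℕ} {x : ℕ → ℕ} {j : ℕ} (hj : j < firstNot p x) :
    x j = p - 1 := by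
  by_contra h
  have h2 : firstNot p x ≤ j := Nat.sInf_le (show j ∈ {i | x i ≠ p - 1} from h)
  omega

lemma phi_eq {p : ℕ} (hp : 2 ≤ p) :
    ∀ (L : ℕ) (x : ℕ → ℕ), (∀ i < L, x i < p) → valL p x L + 1 < p ^ L →
      phi p x = fDig p (valL p x L) := by
  intro L
  induction L with
  | zero => intro x hx hv; simp [valL] at hv
  | succ L ih =>
    intro x hx hv
    have hval : valL p x (L + 1) = p * valL p (fun i => x (i + 1)) L + x 0 := by
      unfold valL
      rw [Finset.sum_range_succ', Finset.mul_sum]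
      simp only [pow_zero, mul_one]
      congr 1
      refine Finset.sum_congr rfl fun i _ => ?_
      rw [pow_succ]
      ring
    have hx0 : x 0 < p := hx 0 (by omega)
    have hppow : p ^ (L + 1) = p * p ^ L := by rw [pow_succ]; ring
    by_cases h0 : x 0 = p - 1
    · set y : ℕ → ℕ := fun i => x (i + 1) with hy
      have hyx : ∀ i < L, y i < p := fun i hi => hx (i + 1) (by omega)
      have hyv : valL p y L + 1 < p ^ L := by
        have e1 : p * (valL p y L + 1) = p * valL p y L + p := by ring
        have h1 : p * (valL p y L + 1) < p * p ^ L := by omega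
        exact lt_of_mul_lt_mul_left h1 (by omega)
      have hne : ∃ i, x i ≠ p - 1 := by
        obtain ⟨i, _, hi⟩ := exists_digit_lt (by omega) x (L + 1) hx hv
        exact ⟨i, hi⟩
      have hfn : firstNot p x = firstNot p y + 1 := by
        have h1 : x (firstNot p x) ≠ p - 1 := Nat.sInf_mem (s := {i | x i ≠ p - 1}) hne
        have h2 : firstNot p x ≠ 0 := fun e => h1 (by rw [e]; exact h0)
        have h3 : y (firstNot p x - 1) ≠ p - 1 := by
          have e : firstNot p x - 1 + 1 = firstNot p x := by omega
          show x (firstNot p x - 1 + 1) ≠ p - 1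
          rw [e]; exact h1
        have h4 : firstNot p y ≤ firstNot p x - 1 :=
          Nat.sInf_le (show _ ∈ {i | y i ≠ p - 1} from h3)
        have h5 : y (firstNot p y) ≠ p - 1 := Nat.sInf_mem (s := {i | y i ≠ p - 1}) ⟨_, h3⟩
        have h6 : firstNot p x ≤ firstNot p y + 1 :=
          Nat.sInf_le (show firstNot p y + 1 ∈ {i | x i ≠ p - 1} from h5)
        omega
      have hphi : phi p x = phi p y := by
        unfold phi
        rw [hfn]
      rw [hphi, ih y hyx hyv, hval, h0,
        fDig_step hp (valL p y L) (p - 1) (by omega), if_pos rfl]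
    · have hfn : firstNot p x = 0 :=
        Nat.eq_zero_of_le_zero (Nat.sInf_le (show 0 ∈ {i | x i ≠ p - 1} from h0))
      unfold phi
      rw [hfn, hval, fDig_step hp _ (x 0) hx0, if_neg h0]

lemma odo_spec {p : ℕ} (hp : 2 ≤ p) (L : ℕ) (x : ℕ → ℕ) (hx : ∀ i < L, x i < p)
    (hv : valL p x L + 1 < p ^ L) :
    (∀ i < L, odo p x i < p) ∧ valL p (odo p x) L = valL p x L + 1
      ∧ ∀ i, L ≤ i → odo p x i = x i := by
  obtain ⟨i1, hi1L, hi1⟩ := exists_digit_lt (by omega) x L hx hv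
  have hi0le : firstNot p x ≤ i1 :=
    Nat.sInf_le (show i1 ∈ {i | x i ≠ p - 1} from hi1)
  set i0 := firstNot p x with hi0def
  have hi0L : i0 < L := by omega
  have hi0 : x i0 ≠ p - 1 := Nat.sInf_mem (s := {i | x i ≠ p - 1}) ⟨i1, hi1⟩
  have hlow : ∀ j, j < i0 → x j = p - 1 := fun j hj => firstNot_lt_of hj
  have hxi0 : x i0 < p := hx i0 hi0L
  have hdig : ∀ i < L, odo p x i < p := by
    intro i hi
    unfold odo
    rw [← hi0def]
    split_ifs with h1 h2
    · omega
    · subst h2; omega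
    · exact hx i hi
  have htail : ∀ i, L ≤ i → odo p x i = x i := by
    intro i hi
    unfold odo
    rw [← hi0def]
    split_ifs with h1 h2
    · omega
    · omega
    · rfl
  refine ⟨hdig, ?_, htail⟩
  have hL : L = (i0 + 1) + (L - (i0 + 1)) := by omega
  have hsplit : ∀ z : ℕ → ℕ, valL p z L
      = valL p z i0 + z i0 * p ^ i0
        + p ^ (i0 + 1) * valL p (fun s => z (i0 + 1 + s)) (L - (i0 + 1)) := by
    intro z
    conv_lhs => rw [hL]
    unfold valL
    rw [Finset.sum_range_add, Finset.sum_range_succ, Finset.mul_sum]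
    congr 1
    refine Finset.sum_congr rfl fun s _ => ?_
    rw [pow_add]
    ring
  rw [hsplit (odo p x), hsplit x]
  have hz1 : valL p (odo p x) i0 = 0 := by
    apply Finset.sum_eq_zero
    intro i hi
    have hi' := Finset.mem_range.mp hi
    have : odo p x i = 0 := by
      unfold odo; rw [← hi0def]; rw [if_pos hi']
    rw [this, Nat.zero_mul]
  have hz2 : odo p x i0 = x i0 + 1 := by
    unfold odo; rw [← hi0def]
    rw [if_neg (by omega), if_pos rfl]
  have hz3 : valL p (fun s => odo p x (i0 + 1 + s)) (L - (i0 + 1))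
      = valL p (fun s => x (i0 + 1 + s)) (L - (i0 + 1)) := by
    unfold valL
    refine Finset.sum_congr rfl fun s _ => ?_
    have : odo p x (i0 + 1 + s) = x (i0 + 1 + s) := by
      unfold odo; rw [← hi0def]
      rw [if_neg (by omega), if_neg (by omega)]
    simp only []
    rw [this]
  have hx1 : valL p x i0 = p ^ i0 - 1 :=
    valL_all_max (by omega) x i0 (fun j hj => hlow j hj)
  rw [hz1, hz2, hz3, hx1]
  have e1 : (x i0 + 1) * p ^ i0 = x i0 * p ^ i0 + p ^ i0 := by ring
  have e2 : 0 < p ^ i0 := pow_pos (by omega) _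
  omega

lemma iter_spec {p : ℕ} (hp : 2 ≤ p) (L : ℕ) (x : ℕ → ℕ) (hx : ∀ i < L, x i < p) :
    ∀ j, valL p x L + j < p ^ L →
      (∀ i < L, ((odo p)^[j] x) i < p) ∧ valL p ((odo p)^[j] x) L = valL p x L + j := by
  intro j
  induction j with
  | zero => intro _; exact ⟨hx, by simp⟩
  | succ j ih =>
    intro hv
    obtain ⟨hd, hval⟩ := ih (by omega)
    have hstep := odo_spec hp L ((odo p)^[j] x) hd (by omega)
    rw [Function.iterate_succ_apply']
    exact ⟨hstep.1, by rw [hstep.2.1, hval]; omega⟩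

lemma phiSum_eq {p : ℕ} (hp : 2 ≤ p) (L : ℕ) (x : ℕ → ℕ) (m : ℕ)
    (hx : ∀ i < L, x i < p) (hv : valL p x L + m < p ^ L) :
    phiSum p m x = F p (valL p x L) m := by
  unfold phiSum F
  refine Finset.sum_congr rfl fun j hj => ?_
  have hjm : j < m := Finset.mem_range.mp hj
  obtain ⟨hd, hval⟩ := iter_spec hp L x hx j (by omega)
  have h2 : valL p ((odo p)^[j] x) L + 1 < p ^ L := by rw [hval]; omega
  rw [phi_eq hp L _ hd h2, hval]

----------------------------------------------------------------
-- digitsOf basics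
----------------------------------------------------------------

lemma digitsOf_lt {p : ℕ} (hp : 0 < p) (u : ℝ) (i : ℕ) : digitsOf p u i < p :=
  Nat.mod_lt _ hp

lemma digitsOf_eq (p : ℕ) (u : ℝ) (i : ℕ) :
    digitsOf p u i = ⌊u * (p : ℝ) ^ (i + 1)⌋₊ % p := by
  unfold digitsOf
  rw [Int.floor_toNat]

lemma nfloor_succ {p : ℕ} (hp : 0 < p) (u : ℝ) (k : ℕ) :
    ⌊u * (p : ℝ) ^ (k + 1)⌋₊ / p = ⌊u * (p : ℝ) ^ k⌋₊ := by
  have hp0 : ((p : ℝ)) ≠ 0 := by positivity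
  have e : u * (p : ℝ) ^ (k + 1) / p = u * (p : ℝ) ^ k := by
    rw [pow_succ]
    field_simp
  rw [← Nat.floor_div_natCast, e]

lemma nfloor_down {p : ℕ} (hp : 0 < p) (u : ℝ) :
    ∀ t L, t ≤ L → ⌊u * (p : ℝ) ^ (L - t)⌋₊ = ⌊u * (p : ℝ) ^ L⌋₊ / p ^ t := by
  intro t
  induction t with
  | zero => intro L _; simp
  | succ t ih =>
    intro L ht
    have h1 : L - t = (L - (t + 1)) + 1 := by omega
    calc ⌊u * (p : ℝ) ^ (L - (t + 1))⌋₊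
        = ⌊u * (p : ℝ) ^ ((L - (t + 1)) + 1)⌋₊ / p := (nfloor_succ hp u _).symm
      _ = ⌊u * (p : ℝ) ^ (L - t)⌋₊ / p := by rw [← h1]
      _ = ⌊u * (p : ℝ) ^ L⌋₊ / p ^ t / p := by rw [ih L (by omega)]
      _ = ⌊u * (p : ℝ) ^ L⌋₊ / p ^ (t + 1) := by
          rw [Nat.div_div_eq_div_mul, pow_succ]

lemma digits_on_interval {p : ℕ} (hp : 2 ≤ p) (L R : ℕ) (hR : R < p ^ L) (u : ℝ)
    (h1 : (R : ℝ) / (p : ℝ) ^ L ≤ u) (h2 : u < ((R : ℝ) + 1) / (p : ℝ) ^ L)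
    (i : ℕ) (hi : i < L) :
    digitsOf p u i = R / p ^ (L - 1 - i) % p := by
  have hppos : (0 : ℝ) < (p : ℝ) ^ L := by positivity
  have hu0 : 0 ≤ u := le_trans (by positivity) h1
  have hNL : ⌊u * (p : ℝ) ^ L⌋₊ = R := by
    rw [Nat.floor_eq_iff (by positivity)]
    constructor
    · rw [div_le_iff₀ hppos] at h1
      linarith
    · rw [lt_div_iff₀ hppos] at h2
      linarith
  have e : i + 1 = L - (L - 1 - i) := by omega
  rw [digitsOf_eq, e, nfloor_down (by omega) u (L - 1 - i) L (by omega), hNL]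

lemma exists_digit_ne {p : ℕ} (hp : 2 ≤ p) (u : ℝ) (hu0 : 0 ≤ u) (K : ℕ) :
    ∃ i, K ≤ i ∧ digitsOf p u i ≠ p - 1 := by
  by_contra hcon
  push_neg at hcon
  have hrec : ∀ t, ⌊u * (p : ℝ) ^ (K + t)⌋₊
      = p ^ t * ⌊u * (p : ℝ) ^ K⌋₊ + (p ^ t - 1) := by
    intro t
    induction t with
    | zero => simp
    | succ t ih =>
      have hdiv : ⌊u * (p : ℝ) ^ (K + t + 1)⌋₊ / p = ⌊u * (p : ℝ) ^ (K + t)⌋₊ :=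
        nfloor_succ (by omega) u (K + t)
      have hmod : ⌊u * (p : ℝ) ^ (K + t + 1)⌋₊ % p = p - 1 := by
        have h := hcon (K + t) (by omega)
        rw [digitsOf_eq] at h
        exact h
      have hdm := Nat.div_add_mod (⌊u * (p : ℝ) ^ (K + t + 1)⌋₊) p
      rw [hdiv, hmod] at hdm
      have h1 : p ^ (t + 1) = p * p ^ t := by rw [pow_succ]; ring
      have h2 : p * (p ^ t * ⌊u * (p : ℝ) ^ K⌋₊)
          = p ^ (t + 1) * ⌊u * (p : ℝ) ^ K⌋₊ := by rw [h1]; ring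
      have h3 : 1 ≤ p ^ t := Nat.one_le_pow _ _ (by omega)
      have h5 : p * ⌊u * (p : ℝ) ^ (K + t)⌋₊
          = p * (p ^ t * ⌊u * (p : ℝ) ^ K⌋₊) + p * (p ^ t - 1) := by
        rw [ih]; ring
      have h6 : p * (p ^ t - 1) + p * 1 = p * p ^ t := by
        rw [← Nat.mul_add]; congr 1; omega
      have e1 : K + (t + 1) = K + t + 1 := by omega
      rw [e1]
      omega
  have hup : u * (p : ℝ) ^ K < ⌊u * (p : ℝ) ^ K⌋₊ + 1 := Nat.lt_floor_add_one _
  set NK : ℕ := ⌊u * (p : ℝ) ^ K⌋₊ with hNK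
  have hεpos : (0 : ℝ) < (NK : ℝ) + 1 - u * (p : ℝ) ^ K := by linarith
  obtain ⟨t, ht⟩ := pow_unbounded_of_one_lt
    (1 / ((NK : ℝ) + 1 - u * (p : ℝ) ^ K))
    (by exact_mod_cast (by omega : 1 < p) : (1 : ℝ) < (p : ℝ))
  have h3 : 1 ≤ p ^ t := Nat.one_le_pow _ _ (by omega)
  have hfl : ((p ^ t * NK + (p ^ t - 1) : ℕ) : ℝ) ≤ u * (p : ℝ) ^ (K + t) := by
    rw [← hrec t]
    exact Nat.floor_le (by positivity)
  have hcast : ((p ^ t * NK + (p ^ t - 1) : ℕ) : ℝ)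
      = (p : ℝ) ^ t * (NK : ℝ) + ((p : ℝ) ^ t - 1) := by
    push_cast [Nat.cast_sub h3]
    ring
  have h4 : (0 : ℝ) < (p : ℝ) ^ t := by positivity
  have hpow : u * (p : ℝ) ^ (K + t) = (u * (p : ℝ) ^ K) * (p : ℝ) ^ t := by
    rw [pow_add]; ring
  have h6 : 1 < ((NK : ℝ) + 1 - u * (p : ℝ) ^ K) * (p : ℝ) ^ t := by
    rw [div_lt_iff₀ hεpos] at ht
    nlinarith
  nlinarith

----------------------------------------------------------------
-- reversed value
----------------------------------------------------------------

def revVal (p : ℕ) (a : ℕ → ℕ) : ℕ → ℕ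
  | 0 => 0
  | L + 1 => p * revVal p a L + a L

lemma revVal_lt {p : ℕ} (hp : 0 < p) (a : ℕ → ℕ) :
    ∀ L, (∀ i < L, a i < p) → revVal p a L < p ^ L := by
  intro L
  induction L with
  | zero => intro _; simp [revVal]
  | succ L ih =>
    intro ha
    have h1 := ih (fun i hi => ha i (by omega))
    have h2 : a L < p := ha L (by omega)
    have h3 : p * (revVal p a L + 1) ≤ p * p ^ L := Nat.mul_le_mul_left p (by omega)
    have h4 : p ^ (L + 1) = p * p ^ L := by rw [pow_succ]; ring
    have h5 : p * (revVal p a L + 1) = p * revVal p a L + p := by ring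
    show p * revVal p a L + a L < p ^ (L + 1)
    omega

lemma revVal_digit {p : ℕ} (hp : 0 < p) (a : ℕ → ℕ) :
    ∀ L, (∀ i < L, a i < p) → ∀ i < L, revVal p a L / p ^ (L - 1 - i) % p = a i := by
  intro L
  induction L with
  | zero => intro _ i hi; omega
  | succ L ih =>
    intro ha i hi
    show (p * revVal p a L + a L) / p ^ (L + 1 - 1 - i) % p = a i
    rcases Nat.lt_or_ge i L with hlt | hge
    · have e1 : L + 1 - 1 - i = (L - 1 - i) + 1 := by omega
      have e2 : (p * revVal p a L + a L) / p ^ ((L - 1 - i) + 1)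
          = revVal p a L / p ^ (L - 1 - i) := by
        have e3 : p ^ ((L - 1 - i) + 1) = p * p ^ (L - 1 - i) := by
          rw [pow_succ]; ring
        rw [e3, ← Nat.div_div_eq_div_mul,
          Nat.mul_add_div hp, Nat.div_eq_of_lt (ha L (by omega)), Nat.add_zero]
      rw [e1, e2]
      exact ih (fun j hj => ha j (by omega)) i hlt
    · have hiL : i = L := by omega
      subst hiL
      have e1 : i + 1 - 1 - i = 0 := by omega
      rw [e1, pow_zero, Nat.div_one, Nat.mul_add_mod,
        Nat.mod_eq_of_lt (ha i (by omega))]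

lemma sum_dig {p : ℕ} (hp : 0 < p) (n : ℕ) :
    ∀ L, ∑ i ∈ Finset.range L, (n / p ^ i % p) * p ^ i = n % p ^ L := by
  intro L
  induction L with
  | zero => simp [Nat.mod_one]
  | succ L ih =>
    rw [Finset.sum_range_succ, ih]
    have a := Nat.div_add_mod n (p ^ L)
    have b := Nat.div_add_mod (n / p ^ L) p
    have c := Nat.div_add_mod n (p ^ (L + 1))
    have d : n / p ^ L / p = n / p ^ (L + 1) := by
      rw [Nat.div_div_eq_div_mul, pow_succ]
    have e : p ^ L * (n / p ^ L)
        = p ^ (L + 1) * (n / p ^ (L + 1)) + p ^ L * (n / p ^ L % p) := by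
      calc p ^ L * (n / p ^ L)
          = p ^ L * (p * (n / p ^ L / p) + n / p ^ L % p) := by rw [b]
        _ = p ^ (L + 1) * (n / p ^ L / p) + p ^ L * (n / p ^ L % p) := by
            rw [pow_succ]; ring
        _ = p ^ (L + 1) * (n / p ^ (L + 1)) + p ^ L * (n / p ^ L % p) := by rw [d]
    have f : (n / p ^ L % p) * p ^ L = p ^ L * (n / p ^ L % p) := Nat.mul_comm _ _
    omega

----------------------------------------------------------------
-- measurability
----------------------------------------------------------------

lemma measurable_digitsOf (p : ℕ) : Measurable (digitsOf p) := by
  apply measurable_pi_lambda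
  intro i
  have h1 : Measurable fun u : ℝ => u * (p : ℝ) ^ (i + 1) :=
    measurable_id.mul_const _
  exact (measurable_of_countable (fun z : ℤ => z.toNat % p)).comp
    (Int.measurable_floor.comp h1)

lemma measurable_firstNot (p : ℕ) : Measurable (firstNot p) := by
  apply measurable_to_countable'
  intro k
  have heq : firstNot p ⁻¹' {k} =
      ((⋂ j, ⋂ (_ : j < k), (fun x : ℕ → ℕ => x j) ⁻¹' {p - 1})
          ∩ ((fun x : ℕ → ℕ => x k) ⁻¹' {p - 1})ᶜ)
        ∪ (if k = 0 then ⋂ j, (fun x : ℕ → ℕ => x j) ⁻¹' {p - 1} else ∅) := by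
    ext x
    simp only [Set.mem_preimage, Set.mem_singleton_iff, Set.mem_union,
      Set.mem_inter_iff, Set.mem_iInter, Set.mem_setOf_eq, Set.mem_compl_iff]
    constructor
    · intro hx
      by_cases hne : ∃ i, x i ≠ p - 1
      · left
        refine ⟨fun j hj => firstNot_lt_of (by omega : j < firstNot p x), ?_⟩
        rw [← hx]
        exact Nat.sInf_mem (s := {i | x i ≠ p - 1}) hne
      · right
        push_neg at hne
        have hS : {i | x i ≠ p - 1} = ∅ := by
          ext i; simp [hne i]
        have hk0 : firstNot p x = 0 := by
          unfold firstNot; rw [hS, Nat.sInf_empty]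
        rw [if_pos (by omega : k = 0)]
        exact Set.mem_iInter.mpr fun j => hne j
    · rintro (⟨hlow, hk⟩ | hall)
      · have h1 : firstNot p x ≤ k :=
          Nat.sInf_le (show k ∈ {i | x i ≠ p - 1} from hk)
        by_contra hne
        have h2 : firstNot p x < k := by omega
        have h3 : x (firstNot p x) ≠ p - 1 :=
          Nat.sInf_mem (s := {i | x i ≠ p - 1}) ⟨k, hk⟩
        exact h3 (hlow _ h2)
      · by_cases hk0 : k = 0
        · rw [if_pos hk0] at hall
          have hall' : ∀ j, x j = p - 1 := fun j => Set.mem_iInter.mp hall j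
          have hS : {i | x i ≠ p - 1} = ∅ := by
            ext i; simp [hall' i]
          subst hk0
          unfold firstNot; rw [hS, Nat.sInf_empty]
        · rw [if_neg hk0] at hall
          exact absurd hall (Set.notMem_empty x)
  rw [heq]
  apply MeasurableSet.union
  · apply MeasurableSet.inter
    · exact MeasurableSet.iInter fun j => MeasurableSet.iInter fun _ =>
        (measurable_pi_apply j) (measurableSet_singleton (p - 1))
    · exact ((measurable_pi_apply k) (measurableSet_singleton (p - 1))).compl
  · split_ifs
    · exact MeasurableSet.iInter fun j =>
        (measurable_pi_apply j) (measurableSet_singleton (p - 1))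
    · exact MeasurableSet.empty

lemma measurable_phi (p : ℕ) : Measurable (phi p) := by
  apply measurable_to_countable'
  intro c
  have heq : phi p ⁻¹' {c}
      = ⋃ k, (firstNot p ⁻¹' {k}) ∩ ((fun x : ℕ → ℕ => x k) ⁻¹' {c}) := by
    ext x
    simp only [Set.mem_preimage, Set.mem_singleton_iff, Set.mem_iUnion,
      Set.mem_inter_iff, Set.mem_setOf_eq]
    constructor
    · intro hx
      exact ⟨firstNot p x, rfl, hx⟩
    · rintro ⟨k, hk, hc⟩
      unfold phi
      rw [hk]
      exact hc
  rw [heq]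
  exact MeasurableSet.iUnion fun k =>
    ((measurable_firstNot p) (measurableSet_singleton k)).inter
      ((measurable_pi_apply k) (measurableSet_singleton c))

lemma measurable_odo (p : ℕ) : Measurable (odo p) := by
  apply measurable_pi_lambda
  intro i
  have : (fun x => odo p x i)
      = (fun q : ℕ × ℕ => if i < q.1 then 0 else if i = q.1 then q.2 + 1 else q.2)
        ∘ (fun x => (firstNot p x, x i)) := rfl
  rw [this]
  exact (measurable_of_countable _).comp
    ((measurable_firstNot p).prodMk (measurable_pi_apply i))

lemma measurable_phiSum (p m : ℕ) : Measurable (phiSum p m) := by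
  unfold phiSum
  apply Finset.measurable_sum
  intro j _
  exact (measurable_phi p).comp ((measurable_odo p).iterate j)

----------------------------------------------------------------
-- pim characterization
----------------------------------------------------------------

lemma phiSum_digitsOf_mem {p : ℕ} (hp : 2 ≤ p) (m : ℕ) (u : ℝ)
    (hu : u ∈ Set.Ico (0 : ℝ) 1) :
    ∃ n, F p n m = phiSum p m (digitsOf p u) := by
  obtain ⟨i, hiK, hine⟩ := exists_digit_ne hp u hu.1 m
  have hx : ∀ j < i + 1, digitsOf p u j < p := fun j _ => digitsOf_lt (by omega) u j
  have hsm : valL p (digitsOf p u) (i + 1) + m < p ^ (i + 1) := by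
    have h1 := valL_small hp (digitsOf p u) i (i + 1) hx (by omega) hine
    have h2 : m ≤ p ^ i :=
      le_of_lt (lt_of_lt_of_le (Nat.lt_pow_self (n := m) (by omega))
        (Nat.pow_le_pow_right (by omega) hiK))
    omega
  exact ⟨valL p (digitsOf p u) (i + 1), (phiSum_eq hp (i + 1) _ m hx hsm).symm⟩

lemma pim_ne_zero {p : ℕ} (hp : 2 ≤ p) (m n : ℕ) : pim p m (F p n m) ≠ 0 := by
  set L := n + m with hL
  have hnm : n + m < p ^ L := Nat.lt_pow_self (n := L) (by omega)
  set a : ℕ → ℕ := fun i => n / p ^ i % p with ha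
  have halt : ∀ i, a i < p := fun i => Nat.mod_lt _ (by omega)
  set R := revVal p a L with hR
  have hRlt : R < p ^ L := revVal_lt (by omega) a L (fun i _ => halt i)
  have hpL : (0 : ℝ) < (p : ℝ) ^ L := by positivity
  set I := Set.Ico ((R : ℝ) / (p : ℝ) ^ L) (((R : ℝ) + 1) / (p : ℝ) ^ L) with hI
  have hIsub : I ⊆ Set.Ico (0 : ℝ) 1 := by
    rintro u ⟨hu1, hu2⟩
    constructor
    · exact le_trans (by positivity) hu1
    · refine lt_of_lt_of_le hu2 ?_
      rw [div_le_one hpL]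
      have : (R : ℝ) + 1 ≤ ((p ^ L : ℕ) : ℝ) := by exact_mod_cast hRlt
      calc (R : ℝ) + 1 ≤ ((p ^ L : ℕ) : ℝ) := this
        _ = (p : ℝ) ^ L := by push_cast; ring
  have hkey : ∀ u ∈ I, phiSum p m (digitsOf p u) = F p n m := by
    rintro u ⟨hu1, hu2⟩
    have hdig : ∀ i < L, digitsOf p u i = a i := by
      intro i hi
      rw [digits_on_interval hp L R hRlt u hu1 hu2 i hi,
        revVal_digit (by omega) a L (fun j _ => halt j) i hi]
    have hx : ∀ i < L, digitsOf p u i < p := fun i hi => by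
      rw [hdig i hi]; exact halt i
    have hval : valL p (digitsOf p u) L = n := by
      unfold valL
      rw [Finset.sum_congr rfl fun i hi' =>
        by rw [hdig i (Finset.mem_range.mp hi')]]
      have := sum_dig (by omega : 0 < p) n L
      rw [ha]
      rw [this, Nat.mod_eq_of_lt (by omega)]
    rw [phiSum_eq hp L (digitsOf p u) m hx (by rw [hval]; omega), hval]
  have h2 : I ⊆ digitsOf p ⁻¹' {x | phiSum p m x = F p n m} :=
    fun u hu => hkey u hu
  have h1 : (volume.restrict (Set.Ico (0 : ℝ) 1))
        (digitsOf p ⁻¹' {x | phiSum p m x = F p n m})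
      ≤ pim p m (F p n m) :=
    Measure.le_map_apply (measurable_digitsOf p).aemeasurable _
  have h3 : (volume.restrict (Set.Ico (0 : ℝ) 1)) I = volume I := by
    rw [Measure.restrict_apply measurableSet_Ico,
      Set.inter_eq_self_of_subset_left hIsub]
  have h5 : ((R : ℝ) + 1) / (p : ℝ) ^ L - (R : ℝ) / (p : ℝ) ^ L
      = 1 / (p : ℝ) ^ L := by
    field_simp
    ring
  have h4 : volume I = ENNReal.ofReal (1 / (p : ℝ) ^ L) := by
    rw [hI, Real.volume_Ico, h5]
  have h6 : (0 : ℝ≥0∞) < volume I := by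
    rw [h4]
    exact ENNReal.ofReal_pos.mpr (by positivity)
  have h7 : volume I ≤ pim p m (F p n m) := by
    calc volume I = (volume.restrict (Set.Ico (0 : ℝ) 1)) I := h3.symm
      _ ≤ (volume.restrict (Set.Ico (0 : ℝ) 1))
            (digitsOf p ⁻¹' {x | phiSum p m x = F p n m}) := measure_mono h2
      _ ≤ pim p m (F p n m) := h1
  exact fun h0 => by rw [h0] at h7; exact absurd (lt_of_lt_of_le h6 h7) (by simp)

lemma pim_eq_zero {p : ℕ} (hp : 2 ≤ p) (m j : ℕ) (h : ¬ ∃ n, F p n m = j) :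
    pim p m j = 0 := by
  have hs : MeasurableSet {x : ℕ → ℕ | phiSum p m x = j} :=
    (measurable_phiSum p m) (measurableSet_singleton j)
  unfold pim lam
  rw [Measure.map_apply (measurable_digitsOf p) hs,
    Measure.restrict_apply ((measurable_digitsOf p) hs)]
  have hempty : digitsOf p ⁻¹' {x | phiSum p m x = j} ∩ Set.Ico (0 : ℝ) 1 = ∅ := by
    apply Set.eq_empty_iff_forall_notMem.mpr
    rintro u ⟨hus, huI⟩
    obtain ⟨n, hn⟩ := phiSum_digitsOf_mem hp m u huI
    exact h ⟨n, hn.trans hus⟩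
  rw [hempty]
  exact measure_empty

lemma d_eq_dd {p : ℕ} (hp : 2 ≤ p) (m : ℕ) : d p m = dd p m := by
  unfold d dd
  congr 1
  ext j
  simp only [Set.mem_setOf_eq, Set.mem_range]
  constructor
  · intro hne
    by_contra h
    exact hne (pim_eq_zero hp m j h)
  · rintro ⟨n, rfl⟩
    exact pim_ne_zero hp m n


/-- `d_{pm} = m Δ_{p-2} + d_m`, and for `0 < k < p`,
`d_{pm+k} = m Δ_{p-2} + Δ_{k-2} + d_m + min{k-1, d_{m+1} - d_m}`. -/
theorem statement_16 (p : ℕ) (hp : 3 ≤ p) (m : ℕ) :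
    d p (p * m) = m * tri (p - 2) + d p m ∧
    (∀ k : ℕ, 0 < k → k < p →
      d p (p * m + k) =
        m * tri (p - 2) + tri (k - 2) + d p m +
          min (k - 1) (d p (m + 1) - d p m)) := by
  have hp2 : 2 ≤ p := by omega
  constructor
  · simp only [d_eq_dd hp2]
    exact dd_mul hp2 m
  · intro k hk hkp
    simp only [d_eq_dd hp2]
    rw [dd_partial hp2 m k hk hkp]
    have h2 := dd_mono p m
    have h1 : tri (k - 1) = tri (k - 2) + (k - 1) := by
      rcases Nat.lt_or_ge k 2 with h | h
      · have hk1 : k = 1 := by omega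
        subst hk1
        simp [tri]
      · have e : k - 1 = (k - 2) + 1 := by omega
        rw [e, tri_succ]
    omega

end Chacon
end

section
/- For every m ≥ 0, the sum of the degree and the lower degree of P_m^p equals (p−2)·m: D_m + d_m = (p−2)m. Equivalently, the mid-degree δ_m = (D_m + d_m)/2 equals (p−2)m/2. -/
open MeasureTheory
open scoped NNReal ENNReal

namespace Chacon

/-! ### Digit lemmas -/

lemma digit_int {p : ℕ} (hp : 1 ≤ p) {u : ℝ} (hu : 0 ≤ u) (n : ℕ) :
    (digitsOf p u n : ℤ) = ⌊u * (p:ℝ)^(n+1)⌋ - p * ⌊u * (p:ℝ)^n⌋ ∧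
    0 ≤ ⌊u * (p:ℝ)^(n+1)⌋ - p * ⌊u * (p:ℝ)^n⌋ ∧
    ⌊u * (p:ℝ)^(n+1)⌋ - p * ⌊u * (p:ℝ)^n⌋ < p := by
  set a := ⌊u * (p:ℝ)^n⌋ with ha
  set b := ⌊u * (p:ℝ)^(n+1)⌋ with hb
  have hppos : (0:ℝ) < p := by exact_mod_cast hp
  have hb0 : 0 ≤ b := Int.floor_nonneg.mpr (by positivity)
  have hle : p * a ≤ b := by
    rw [hb]
    apply Int.le_floor.mpr
    have h1 : (a:ℝ) ≤ u * (p:ℝ)^n := Int.floor_le _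
    have : (a:ℝ) * p ≤ u * (p:ℝ)^n * p := by
      exact mul_le_mul_of_nonneg_right h1 hppos.le
    push_cast
    calc ((p:ℝ)) * a = a * p := by ring
    _ ≤ u * (p:ℝ)^n * p := this
    _ = u * (p:ℝ)^(n+1) := by ring
  have hlt : b < p * a + p := by
    rw [hb]
    apply Int.floor_lt.mpr
    have h1 : u * (p:ℝ)^n < a + 1 := Int.lt_floor_add_one _
    have : u * (p:ℝ)^n * p < (a + 1) * p := by
      exact mul_lt_mul_of_pos_right h1 hppos
    push_cast
    calc u * (p:ℝ)^(n+1) = u * (p:ℝ)^n * p := by ring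
    _ < (a+1) * p := this
    _ = (p:ℝ) * a + p := by ring
  refine ⟨?_, by omega, by omega⟩
  have h1 : (digitsOf p u n : ℤ) = (b.toNat : ℤ) % p := by
    simp only [digitsOf, ← hb]
    push_cast
    ring
  rw [h1, Int.toNat_of_nonneg hb0]
  have h2 : b % (p:ℤ) = (b - p * a) % p := by
    conv_lhs => rw [show b = (b - p * a) + a * p by ring]
    rw [Int.add_mul_emod_self_right]
  rw [h2, Int.emod_eq_of_lt (by omega) (by omega)]

lemma digit_lt {p : ℕ} (hp : 1 ≤ p) (u : ℝ) (n : ℕ) : digitsOf p u n < p :=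
  Nat.mod_lt _ hp

lemma floor_base {u : ℝ} (hu : u ∈ Set.Ico (0:ℝ) 1) (p : ℕ) : ⌊u * (p:ℝ)^0⌋ = 0 := by
  rw [pow_zero, mul_one]
  exact Int.floor_eq_zero_iff.mpr (by simpa [Set.mem_Ico] using hu)

/-- if the first `k` digits are all `p-1` then `⌊u p^k⌋ = p^k - 1`. -/
lemma run_floor {p : ℕ} (hp : 1 ≤ p) {u : ℝ} (hu : u ∈ Set.Ico (0:ℝ) 1) {k : ℕ}
    (h : ∀ j < k, digitsOf p u j = p - 1) : ⌊u * (p:ℝ)^k⌋ = (p:ℤ)^k - 1 := by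
  induction k with
  | zero => simpa using floor_base hu p
  | succ k ih =>
    have hik := ih (fun j hj => h j (by omega))
    have hd := (digit_int hp hu.1 k).1
    have hdk : ((digitsOf p u k : ℕ) : ℤ) = (p:ℤ) - 1 := by
      rw [h k (by omega)]; push_cast [hp]; omega
    rw [hdk] at hd
    have : ⌊u * (p:ℝ)^(k+1)⌋ = (p:ℤ) * ⌊u * (p:ℝ)^k⌋ + ((p:ℤ) - 1) := by omega
    rw [this, hik]; ring

lemma digits_mem_gammaStar {p : ℕ} (hp : 2 ≤ p) {u : ℝ} (hu : u ∈ Set.Ico (0:ℝ) 1) :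
    digitsOf p u ∈ GammaStar p := by
  refine ⟨fun i => digit_lt (by omega) u i, ?_⟩
  by_contra hfin
  rw [Set.not_infinite] at hfin
  obtain ⟨n, hn⟩ := hfin.bddAbove
  simp only [upperBounds, Set.mem_setOf_eq] at hn
  have hall : ∀ j, n + 1 ≤ j → digitsOf p u j = p - 1 := by
    intro j hj
    by_contra hne
    have := hn (show j ∈ {i | digitsOf p u i ≠ p - 1} from hne)
    omega
  -- floors along the constant run
  set a := ⌊u * (p:ℝ)^(n+1)⌋ with ha
  have hrun : ∀ t : ℕ, ⌊u * (p:ℝ)^(n+1+t)⌋ = (p:ℤ)^t * (a + 1) - 1 := by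
    intro t
    induction t with
    | zero => simp [ha]
    | succ t ih =>
      have hd := (digit_int (by omega : 1 ≤ p) hu.1 (n+1+t)).1
      have hdk : ((digitsOf p u (n+1+t) : ℕ) : ℤ) = (p:ℤ) - 1 := by
        rw [hall (n+1+t) (by omega)]; push_cast [(by omega : 1 ≤ p)]; omega
      rw [hdk] at hd
      have h2 : ⌊u * (p:ℝ)^(n+1+(t+1))⌋ = (p:ℤ) * ⌊u * (p:ℝ)^(n+1+t)⌋ + ((p:ℤ) - 1) := by
        have : n + 1 + (t+1) = (n+1+t) + 1 := by ring
        rw [this]; omega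
      rw [h2, ih]; ring
  have heps : (0:ℝ) < (a + 1 : ℤ) - u * (p:ℝ)^(n+1) := by
    have := Int.lt_floor_add_one (u * (p:ℝ)^(n+1))
    push_cast
    push_cast at this
    linarith
  set ε : ℝ := ((a + 1 : ℤ) : ℝ) - u * (p:ℝ)^(n+1) with hε
  obtain ⟨t, ht⟩ := pow_unbounded_of_one_lt (1/ε) (by exact_mod_cast (by omega : 1 < p) : (1:ℝ) < p)
  have hfl : ((p:ℤ)^t * (a+1) - 1 : ℤ) ≤ u * (p:ℝ)^(n+1+t) := by
    rw [← hrun t]; exact Int.floor_le _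
  have hcontr : (p:ℝ)^t * ε ≤ 1 := by
    push_cast at hfl
    have hpw : (p:ℝ)^(n+1+t) = (p:ℝ)^(n+1) * (p:ℝ)^t := by rw [pow_add]
    rw [hpw] at hfl
    have : (p:ℝ)^t * (((a:ℝ) + 1) - u * (p:ℝ)^(n+1)) ≤ 1 := by nlinarith
    simpa [hε] using this
  have hgt : (1:ℝ) < (p:ℝ)^t * ε := by
    rw [div_lt_iff₀ heps] at ht
    linarith
  linarith

lemma sInf_eq_of {s : Set ℕ} {k : ℕ} (h : k ∈ s) (h2 : ∀ j < k, j ∉ s) : sInf s = k :=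
  le_antisymm (Nat.sInf_le h) (le_of_not_gt fun hl => h2 _ hl (Nat.sInf_mem ⟨k, h⟩))

lemma firstNot_spec {p : ℕ} {x : ℕ → ℕ} (hx : x ∈ GammaStar p) :
    x (firstNot p x) ≠ p - 1 ∧ ∀ j < firstNot p x, x j = p - 1 := by
  have hne : {i | x i ≠ p - 1}.Nonempty := hx.2.nonempty
  refine ⟨Nat.sInf_mem hne, fun j hj => ?_⟩
  by_contra hne2
  have := Nat.sInf_le (show j ∈ {i | x i ≠ p - 1} from hne2)
  rw [firstNot] at hj
  omega

lemma firstNot_eq {p : ℕ} {x : ℕ → ℕ} {k : ℕ} (hk : x k ≠ p - 1)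
    (hj : ∀ j < k, x j = p - 1) : firstNot p x = k :=
  sInf_eq_of (show k ∈ {i | x i ≠ p - 1} from hk)
    (fun j hjk hmem => hmem (hj j hjk))
/-! ### Interval location of `firstNot` of the digits -/

lemma firstNot_interval {p : ℕ} (hp : 2 ≤ p) {u : ℝ} (hu : u ∈ Set.Ico (0:ℝ) 1) :
    1 - ((p:ℝ)^(firstNot p (digitsOf p u)))⁻¹ ≤ u ∧
    u < 1 - ((p:ℝ)^(firstNot p (digitsOf p u) + 1))⁻¹ := by
  obtain ⟨hk1, hk2⟩ := firstNot_spec (digits_mem_gammaStar hp hu)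
  set k := firstNot p (digitsOf p u) with hk
  have hrun : ⌊u * (p:ℝ)^k⌋ = (p:ℤ)^k - 1 := run_floor (by omega) hu hk2
  have hppos : (0:ℝ) < p := by exact_mod_cast (by omega : 0 < p)
  have hpk : (0:ℝ) < (p:ℝ)^k := by positivity
  have hpk1 : (0:ℝ) < (p:ℝ)^(k+1) := by positivity
  constructor
  · have h1 : (((p:ℤ)^k - 1 : ℤ) : ℝ) ≤ u * (p:ℝ)^k := by
      rw [← hrun]; exact Int.floor_le _
    push_cast at h1
    have heq : 1 - ((p:ℝ)^k)⁻¹ = ((p:ℝ)^k - 1)/(p:ℝ)^k := by field_simp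
    rw [heq, div_le_iff₀ hpk]
    nlinarith
  · have hxk : digitsOf p u k ≤ p - 2 := by
      have := digit_lt (by omega : 1 ≤ p) u k
      omega
    have hfl : ⌊u * (p:ℝ)^(k+1)⌋ = (p:ℤ) * ((p:ℤ)^k - 1) + (digitsOf p u k : ℤ) := by
      have hd := (digit_int (by omega : 1 ≤ p) hu.1 k).1
      rw [hrun] at hd
      omega
    have h2 : u * (p:ℝ)^(k+1) < (((p:ℤ) * ((p:ℤ)^k - 1) + (digitsOf p u k : ℤ) + 1 : ℤ) : ℝ) := by
      have := Int.lt_floor_add_one (u * (p:ℝ)^(k+1))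
      rw [hfl] at this
      push_cast at this ⊢
      linarith
    have hxkr : ((digitsOf p u k : ℕ) : ℝ) ≤ (p:ℝ) - 2 := by
      have h3 : ((digitsOf p u k : ℕ) : ℝ) ≤ ((p - 2 : ℕ) : ℝ) := by exact_mod_cast hxk
      have h4 : ((p - 2 : ℕ) : ℝ) = (p:ℝ) - 2 := by
        push_cast [(by omega : 2 ≤ p)]
        ring
      linarith [h4 ▸ h3]
    push_cast at h2
    have heq : 1 - ((p:ℝ)^(k+1))⁻¹ = ((p:ℝ)^(k+1) - 1)/(p:ℝ)^(k+1) := by field_simp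
    rw [heq, lt_div_iff₀ hpk1]
    have hpow : (p:ℝ)^(k+1) = (p:ℝ) * (p:ℝ)^k := by ring
    nlinarith

/-! ### The real realization of the odometer -/

noncomputable def sR (p : ℕ) (u : ℝ) : ℝ :=
  u - 1 + ((p:ℝ)^(firstNot p (digitsOf p u)))⁻¹ + ((p:ℝ)^(firstNot p (digitsOf p u)+1))⁻¹

lemma sR_mem {p : ℕ} (hp : 2 ≤ p) {u : ℝ} (hu : u ∈ Set.Ico (0:ℝ) 1) :
    sR p u ∈ Set.Ico (((p:ℝ)^(firstNot p (digitsOf p u)+1))⁻¹)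
      (((p:ℝ)^(firstNot p (digitsOf p u)))⁻¹) := by
  obtain ⟨h1, h2⟩ := firstNot_interval hp hu
  constructor
  · simp only [sR]; linarith
  · simp only [sR]; linarith

lemma sR_mem01 {p : ℕ} (hp : 2 ≤ p) {u : ℝ} (hu : u ∈ Set.Ico (0:ℝ) 1) :
    sR p u ∈ Set.Ico (0:ℝ) 1 := by
  obtain ⟨h1, h2⟩ := sR_mem hp hu
  have hppos : (0:ℝ) < p := by exact_mod_cast (by omega : 0 < p)
  have hlow : (0:ℝ) < ((p:ℝ)^(firstNot p (digitsOf p u)+1))⁻¹ := by positivity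
  have hhigh : ((p:ℝ)^(firstNot p (digitsOf p u)))⁻¹ ≤ 1 := by
    rw [inv_le_one_iff₀]
    right
    exact one_le_pow₀ (by exact_mod_cast (by omega : 1 ≤ p))
  exact ⟨le_of_lt (lt_of_lt_of_le hlow h1), lt_of_lt_of_le h2 hhigh⟩

lemma sR_digits {p : ℕ} (hp : 2 ≤ p) {u : ℝ} (hu : u ∈ Set.Ico (0:ℝ) 1) :
    digitsOf p (sR p u) = odo p (digitsOf p u) := by
  obtain ⟨hk1, hk2⟩ := firstNot_spec (digits_mem_gammaStar hp hu)
  set k := firstNot p (digitsOf p u) with hk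
  set v := sR p u with hv
  have hv01 : v ∈ Set.Ico (0:ℝ) 1 := sR_mem01 hp hu
  have hvmem := sR_mem hp hu
  have hppos : (0:ℝ) < p := by exact_mod_cast (by omega : 0 < p)
  have hp1 : 1 ≤ p := by omega
  have hpne : (p:ℝ) ≠ 0 := ne_of_gt hppos
  -- low floors vanish
  have floor_low : ∀ n ≤ k, ⌊v * (p:ℝ)^n⌋ = 0 := by
    intro n hn
    apply Int.floor_eq_zero_iff.mpr
    constructor
    · have : (0:ℝ) ≤ v := hv01.1
      positivity
    · have h2 : v < ((p:ℝ)^k)⁻¹ := hvmem.2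
      have h3 : (p:ℝ)^n ≤ (p:ℝ)^k :=
        pow_le_pow_right₀ (by exact_mod_cast hp1) hn
      have hpk : (0:ℝ) < (p:ℝ)^k := by positivity
      calc v * (p:ℝ)^n ≤ v * (p:ℝ)^k := mul_le_mul_of_nonneg_left h3 hv01.1
      _ < ((p:ℝ)^k)⁻¹ * (p:ℝ)^k := mul_lt_mul_of_pos_right h2 hpk
      _ = 1 := inv_mul_cancel₀ (ne_of_gt hpk)
  -- high floors shift by an integer
  have floor_high : ∀ t : ℕ, ⌊v * (p:ℝ)^(k+1+t)⌋ =
      ⌊u * (p:ℝ)^(k+1+t)⌋ + (-(p:ℤ)^(k+1+t) + (p:ℤ)^(t+1) + (p:ℤ)^t) := by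
    intro t
    have hveq : v * (p:ℝ)^(k+1+t) =
        u * (p:ℝ)^(k+1+t) + ((-(p:ℤ)^(k+1+t) + (p:ℤ)^(t+1) + (p:ℤ)^t : ℤ) : ℝ) := by
      rw [hv]
      simp only [sR, ← hk]
      push_cast
      have e1 : ((p:ℝ)^k)⁻¹ * (p:ℝ)^(k+1+t) = (p:ℝ)^(t+1) := by
        rw [show (p:ℝ)^(k+1+t) = (p:ℝ)^k * (p:ℝ)^(t+1) by rw [← pow_add]; ring_nf]
        exact inv_mul_cancel_left₀ (pow_ne_zero _ hpne) _
      have e2 : ((p:ℝ)^(k+1))⁻¹ * (p:ℝ)^(k+1+t) = (p:ℝ)^t := by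
        rw [show (p:ℝ)^(k+1+t) = (p:ℝ)^(k+1) * (p:ℝ)^t by rw [← pow_add]]
        exact inv_mul_cancel_left₀ (pow_ne_zero _ hpne) _
      nlinarith [e1, e2]
    rw [hveq, Int.floor_add_intCast]
  -- the digit computation
  funext i
  have hdv := (digit_int hp1 hv01.1 i).1
  have hdu := (digit_int hp1 hu.1 i).1
  rcases lt_trichotomy i k with hik | hik | hik
  · -- i < k
    have h0 : odo p (digitsOf p u) i = 0 := by
      simp only [odo, ← hk]
      rw [if_pos hik]
    rw [h0]
    have hz : (digitsOf p v i : ℤ) = 0 := by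
      rw [hdv, floor_low i (by omega), floor_low (i+1) (by omega)]
      ring
    exact_mod_cast hz
  · -- i = k
    rw [hik] at hdv hdu ⊢
    have h0 : odo p (digitsOf p u) k = digitsOf p u k + 1 := by
      simp only [odo, ← hk]
      simp
    rw [h0]
    have hrun : ⌊u * (p:ℝ)^k⌋ = (p:ℤ)^k - 1 := run_floor hp1 hu hk2
    have hfl : ⌊u * (p:ℝ)^(k+1)⌋ = (p:ℤ) * ((p:ℤ)^k - 1) + (digitsOf p u k : ℤ) := by
      rw [hrun] at hdu
      omega
    have hfh := floor_high 0
    rw [show k+1+0 = k+1 by ring] at hfh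
    have hz : (digitsOf p v k : ℤ) = (digitsOf p u k : ℤ) + 1 := by
      rw [hdv, floor_low k le_rfl, hfh, hfl]
      ring
    exact_mod_cast hz
  · -- i > k
    obtain ⟨t, rfl⟩ : ∃ t, i = k + 1 + t := ⟨i - k - 1, by omega⟩
    have h0 : odo p (digitsOf p u) (k+1+t) = digitsOf p u (k+1+t) := by
      simp only [odo, ← hk]
      rw [if_neg (by omega), if_neg (by omega)]
    rw [h0]
    have hf1 := floor_high t
    have hf2 := floor_high (t+1)
    rw [show k+1+(t+1) = (k+1+t)+1 by ring] at hf2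
    have hz : (digitsOf p v (k+1+t) : ℤ) = (digitsOf p u (k+1+t) : ℤ) := by
      rw [hdv, hf1, hf2, hdu]
      ring
    exact_mod_cast hz

/-! ### The complement map -/

def Tseq (p : ℕ) (x : ℕ → ℕ) : ℕ → ℕ := fun i => p - 1 - x i

/-- p-adic rationals -/
def Qset (p : ℕ) : Set ℝ := {u | ∃ (n : ℕ) (z : ℤ), u * (p:ℝ)^n = z}

lemma countable_Qset {p : ℕ} (hp : 1 ≤ p) : (Qset p).Countable := by
  have hppos : (0:ℝ) < p := by exact_mod_cast hp
  have : Qset p ⊆ ⋃ (n : ℕ), ⋃ (z : ℤ), {(z:ℝ) / (p:ℝ)^n} := by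
    rintro u ⟨n, z, hz⟩
    refine Set.mem_iUnion.mpr ⟨n, Set.mem_iUnion.mpr ⟨z, ?_⟩⟩
    have hpn : (p:ℝ)^n ≠ 0 := by positivity
    simp only [Set.mem_singleton_iff]
    field_simp
    linarith [hz]
  exact Set.Countable.mono this (Set.countable_iUnion fun n =>
    Set.countable_iUnion fun z => Set.countable_singleton _)

lemma ceil_eq_floor_add_one {y : ℝ} (h : ∀ z : ℤ, y ≠ z) : ⌈y⌉ = ⌊y⌋ + 1 := by
  rcases lt_or_eq_of_le (Int.ceil_le_floor_add_one y) with h1 | h1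
  · have h3 : ⌈y⌉ ≤ ⌊y⌋ := by omega
    have hy : y = (⌊y⌋ : ℝ) := le_antisymm
      (le_trans (Int.le_ceil y) (by exact_mod_cast h3)) (Int.floor_le y)
    exact absurd hy (h _)
  · exact h1

lemma compl_digits {p : ℕ} (hp : 2 ≤ p) {u : ℝ} (hu : u ∈ Set.Ioo (0:ℝ) 1)
    (hq : u ∉ Qset p) : digitsOf p (1 - u) = Tseq p (digitsOf p u) := by
  have hp1 : 1 ≤ p := by omega
  have h1u : (1 - u) ∈ Set.Ico (0:ℝ) 1 := ⟨by linarith [hu.2], by linarith [hu.1]⟩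
  have hu' : u ∈ Set.Ico (0:ℝ) 1 := ⟨le_of_lt hu.1, hu.2⟩
  have hfl : ∀ n : ℕ, ⌊(1 - u) * (p:ℝ)^n⌋ = (p:ℤ)^n - ⌊u * (p:ℝ)^n⌋ - 1 := by
    intro n
    have hni : ∀ z : ℤ, u * (p:ℝ)^n ≠ z := fun z hz => hq ⟨n, z, hz⟩
    have hceil : ⌈u * (p:ℝ)^n⌉ = ⌊u * (p:ℝ)^n⌋ + 1 := ceil_eq_floor_add_one hni
    rw [show (1 - u) * (p:ℝ)^n = -(u * (p:ℝ)^n) + (((p:ℤ)^n : ℤ) : ℝ) by push_cast; ring,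
      Int.floor_add_intCast, Int.floor_neg, hceil]
    ring
  funext i
  have hdv := (digit_int hp1 h1u.1 i).1
  have hdu := (digit_int hp1 hu'.1 i).1
  have hle : digitsOf p u i ≤ p - 1 := by
    have := digit_lt hp1 u i
    omega
  have hz : (digitsOf p (1-u) i : ℤ) = ((p:ℤ) - 1) - (digitsOf p u i : ℤ) := by
    rw [hdv, hfl, hfl, hdu]
    ring
  have hgoal : (Tseq p (digitsOf p u) i : ℤ) = ((p:ℤ) - 1) - (digitsOf p u i : ℤ) := by
    simp only [Tseq]
    push_cast [hle, hp1]
    omega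
  omega

/-! ### Sequence combinatorics -/

lemma odo_mem_gammaStar {p : ℕ} (hp : 2 ≤ p) {x : ℕ → ℕ} (hx : x ∈ GammaStar p) :
    odo p x ∈ GammaStar p := by
  obtain ⟨hk1, hk2⟩ := firstNot_spec hx
  set k := firstNot p x with hk
  constructor
  · intro i
    simp only [odo, ← hk]
    split_ifs with h1 h2
    · omega
    · have := hx.1 i
      subst h2
      omega
    · exact hx.1 i
  · apply Set.Infinite.mono ?_ ((hx.2).diff (Set.finite_Iic k))
    rintro i ⟨hi1, hi2⟩
    simp only [Set.mem_Iic, not_le] at hi2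
    simp only [Set.mem_setOf_eq, odo, ← hk]
    rw [if_neg (by omega), if_neg (by omega)]
    exact hi1

lemma odo_iter_mem_gammaStar {p : ℕ} (hp : 2 ≤ p) {x : ℕ → ℕ} (hx : x ∈ GammaStar p)
    (j : ℕ) : (odo p)^[j] x ∈ GammaStar p := by
  induction j with
  | zero => exact hx
  | succ j ih => rw [Function.iterate_succ_apply']; exact odo_mem_gammaStar hp ih

lemma phi_le {p : ℕ} (hp : 2 ≤ p) {x : ℕ → ℕ} (hx : x ∈ GammaStar p) :
    phi p x ≤ p - 2 := by
  obtain ⟨hk1, _⟩ := firstNot_spec hx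
  have := hx.1 (firstNot p x)
  simp only [phi]
  omega

lemma phiSum_le {p : ℕ} (hp : 2 ≤ p) {x : ℕ → ℕ} (hx : x ∈ GammaStar p) (m : ℕ) :
    phiSum p m x ≤ (p - 2) * m := by
  calc phiSum p m x ≤ ∑ _j ∈ Finset.range m, (p - 2) :=
        Finset.sum_le_sum fun j _ => phi_le hp (odo_iter_mem_gammaStar hp hx j)
  _ = (p - 2) * m := by rw [Finset.sum_const, Finset.card_range, smul_eq_mul, mul_comm]

lemma key1 {p : ℕ} (hp : 2 ≤ p) {w : ℕ → ℕ} (hw : w ∈ GammaStar p) :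
    odo p (Tseq p (odo p w)) = Tseq p w ∧
    phi p (Tseq p (odo p w)) + phi p w = p - 2 := by
  obtain ⟨hk1, hk2⟩ := firstNot_spec hw
  set k := firstNot p w with hk
  have hwk : w k < p := hw.1 k
  have hwk2 : w k ≤ p - 2 := by omega
  set y := Tseq p (odo p w) with hy
  have hyval : ∀ j, y j = if j < k then p - 1 else if j = k then p - 2 - w k else p - 1 - w j := by
    intro j
    simp only [hy, Tseq, odo, ← hk]
    split_ifs with h1 h2
    · omega
    · rw [h2]; omega
    · rfl
  have hfy : firstNot p y = k := by
    apply firstNot_eq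
    · have h : y k = p - 2 - w k := by rw [hyval k]; simp
      omega
    · intro j hj
      rw [hyval j, if_pos hj]
  constructor
  · funext j
    simp only [odo, hfy]
    rcases lt_trichotomy j k with h | h | h
    · rw [if_pos h]
      simp only [Tseq]
      rw [hk2 j h]
      omega
    · rw [if_neg (by omega), if_pos h, hyval j, if_neg (by omega), if_pos h, h]
      simp only [Tseq]
      omega
    · rw [if_neg (by omega), if_neg (by omega), hyval j, if_neg (by omega), if_neg (by omega)]
      rfl
  · have h : y k = p - 2 - w k := by rw [hyval k]; simp
    simp only [phi, hfy, ← hk, h]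
    omega

lemma key3 {p : ℕ} (hp : 2 ≤ p) {x : ℕ → ℕ} (hx : x ∈ GammaStar p) {m j : ℕ} (hj : j ≤ m) :
    (odo p)^[j] (Tseq p ((odo p)^[m] x)) = Tseq p ((odo p)^[m-j] x) := by
  induction j with
  | zero => simp
  | succ j ih =>
    rw [Function.iterate_succ_apply', ih (by omega),
      show m - j = m - (j+1) + 1 by omega, Function.iterate_succ_apply']
    exact (key1 hp (odo_iter_mem_gammaStar hp hx (m-(j+1)))).1

lemma key4 {p : ℕ} (hp : 2 ≤ p) {x : ℕ → ℕ} (hx : x ∈ GammaStar p) (m : ℕ) :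
    phiSum p m (Tseq p ((odo p)^[m] x)) + phiSum p m x = (p - 2) * m := by
  have hrefl : phiSum p m x = ∑ j ∈ Finset.range m, phi p ((odo p)^[m-1-j] x) :=
    (Finset.sum_range_reflect (fun j => phi p ((odo p)^[j] x)) m).symm
  rw [phiSum, hrefl, ← Finset.sum_add_distrib]
  have hterm : ∀ j ∈ Finset.range m,
      phi p ((odo p)^[j] (Tseq p ((odo p)^[m] x))) + phi p ((odo p)^[m-1-j] x) = p - 2 := by
    intro j hj
    simp only [Finset.mem_range] at hj
    rw [key3 hp hx (by omega : j ≤ m),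
      show m - j = m - 1 - j + 1 by omega, Function.iterate_succ_apply']
    exact (key1 hp (odo_iter_mem_gammaStar hp hx (m-1-j))).2
  rw [Finset.sum_congr rfl hterm, Finset.sum_const, Finset.card_range, smul_eq_mul, mul_comm]

lemma measurable_sR (p : ℕ) : Measurable (sR p) := by
  unfold sR
  have h1 : Measurable (fun u => ((p:ℝ)^(firstNot p (digitsOf p u)))⁻¹) :=
    (measurable_from_top (f := fun k : ℕ => ((p:ℝ)^k)⁻¹)).comp
      ((measurable_firstNot p).comp (measurable_digitsOf p))
  have h2 : Measurable (fun u => ((p:ℝ)^(firstNot p (digitsOf p u)+1))⁻¹) :=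
    (measurable_from_top (f := fun k : ℕ => ((p:ℝ)^(k+1))⁻¹)).comp
      ((measurable_firstNot p).comp (measurable_digitsOf p))
  exact (((measurable_id.sub_const 1).add h1).add h2)

/-! ### Measure preservation -/

/-- the pieces of the domain partition -/
def Apiece (p k : ℕ) : Set ℝ := Set.Ico (1 - ((p:ℝ)^k)⁻¹) (1 - ((p:ℝ)^(k+1))⁻¹)

/-- the pieces of the range partition -/
def Bpiece (p k : ℕ) : Set ℝ := Set.Ico (((p:ℝ)^(k+1))⁻¹) (((p:ℝ)^k)⁻¹)

lemma Apiece_subset {p : ℕ} (hp : 2 ≤ p) (k : ℕ) : Apiece p k ⊆ Set.Ico (0:ℝ) 1 := by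
  intro u hu
  obtain ⟨h1, h2⟩ := hu
  have hp1 : (1:ℝ) ≤ (p:ℝ)^k := one_le_pow₀ (by exact_mod_cast (by omega : 1 ≤ p))
  have hpk1 : (0:ℝ) < (p:ℝ)^(k+1) := by positivity
  have : ((p:ℝ)^k)⁻¹ ≤ 1 := by
    rw [inv_le_one_iff₀]; right; exact hp1
  constructor
  · linarith
  · have : (0:ℝ) < ((p:ℝ)^(k+1))⁻¹ := by positivity
    linarith

lemma mem_Apiece_iff {p : ℕ} (hp : 2 ≤ p) {u : ℝ} (hu : u ∈ Set.Ico (0:ℝ) 1) (k : ℕ) :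
    u ∈ Apiece p k ↔ firstNot p (digitsOf p u) = k := by
  have hint := firstNot_interval hp hu
  constructor
  · intro ⟨h1, h2⟩
    set k' := firstNot p (digitsOf p u) with hk'
    by_contra hne
    have hp1 : (1:ℝ) < (p:ℝ) := by exact_mod_cast (by omega : 1 < p)
    rcases lt_or_gt_of_ne hne with h | h
    · -- k' < k : u < 1 - (p^(k'+1))⁻¹ ≤ 1 - (p^k)⁻¹ ≤ u
      have hpow : (p:ℝ)^(k'+1) ≤ (p:ℝ)^k := pow_le_pow_right₀ (le_of_lt hp1) (by omega)
      have : ((p:ℝ)^k)⁻¹ ≤ ((p:ℝ)^(k'+1))⁻¹ :=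
        inv_anti₀ (by positivity) hpow
      linarith [hint.2]
    · -- k < k' : u < 1 - (p^(k+1))⁻¹ and 1 - (p^k')⁻¹ ≤ u with k+1 ≤ k'
      have hpow : (p:ℝ)^(k+1) ≤ (p:ℝ)^k' := pow_le_pow_right₀ (le_of_lt hp1) (by omega)
      have : ((p:ℝ)^k')⁻¹ ≤ ((p:ℝ)^(k+1))⁻¹ :=
        inv_anti₀ (by positivity) hpow
      linarith [hint.1]
  · intro h
    rw [← h] at *
    exact ⟨hint.1, hint.2⟩

lemma Apiece_union {p : ℕ} (hp : 2 ≤ p) : ⋃ k, Apiece p k = Set.Ico (0:ℝ) 1 := by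
  apply Set.Subset.antisymm
  · exact Set.iUnion_subset fun k => Apiece_subset hp k
  · intro u hu
    exact Set.mem_iUnion.mpr ⟨firstNot p (digitsOf p u),
      (mem_Apiece_iff hp hu _).mpr rfl⟩

lemma Apiece_disjoint {p : ℕ} (hp : 2 ≤ p) :
    Pairwise (Function.onFun Disjoint (Apiece p)) := by
  intro k k' hkk'
  rw [Function.onFun, Set.disjoint_left]
  intro u hk hk'
  have hu := Apiece_subset hp k hk
  rw [mem_Apiece_iff hp hu] at hk hk'
  exact hkk' (hk.symm.trans hk')

lemma Bpiece_union {p : ℕ} (hp : 2 ≤ p) : ⋃ k, Bpiece p k = Set.Ioo (0:ℝ) 1 := by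
  have hp1 : (1:ℝ) < (p:ℝ) := by exact_mod_cast (by omega : 1 < p)
  apply Set.Subset.antisymm
  · intro u hu
    rw [Set.mem_iUnion] at hu
    obtain ⟨k, h1, h2⟩ := hu
    have ha : (0:ℝ) < ((p:ℝ)^(k+1))⁻¹ := by positivity
    have hb : ((p:ℝ)^k)⁻¹ ≤ 1 := by
      rw [inv_le_one_iff₀]; right; exact one_le_pow₀ (le_of_lt hp1)
    exact ⟨lt_of_lt_of_le ha h1, lt_of_lt_of_le h2 hb⟩
  · intro u hu
    obtain ⟨h1, h2⟩ := hu
    have hex : ∃ k : ℕ, ((p:ℝ)^(k+1))⁻¹ ≤ u := by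
      obtain ⟨k, hk⟩ := pow_unbounded_of_one_lt (1/u) hp1
      refine ⟨k, ?_⟩
      rw [div_lt_iff₀ h1] at hk
      rw [inv_le_iff_one_le_mul₀ (by positivity)]
      have hmono : (p:ℝ)^k ≤ (p:ℝ)^(k+1) := pow_le_pow_right₀ (le_of_lt hp1) (by omega)
      nlinarith [pow_pos (by linarith : (0:ℝ) < p) k]
    set k0 := Nat.find hex with hk0
    refine Set.mem_iUnion.mpr ⟨k0, Nat.find_spec hex, ?_⟩
    rcases Nat.eq_zero_or_pos k0 with h | h
    · rw [h]
      simpa using h2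
    · have hnot := Nat.find_min hex (show k0 - 1 < k0 by omega)
      rw [show k0 - 1 + 1 = k0 by omega] at hnot
      linarith [lt_of_not_ge hnot]

lemma Bpiece_disjoint {p : ℕ} (hp : 2 ≤ p) :
    Pairwise (Function.onFun Disjoint (Bpiece p)) := by
  have hp1 : (1:ℝ) < (p:ℝ) := by exact_mod_cast (by omega : 1 < p)
  intro k k' hkk'
  rw [Function.onFun, Set.disjoint_left]
  intro u hk hk'
  wlog h : k < k' generalizing k k'
  · exact this (Ne.symm hkk') hk' hk (by omega)
  obtain ⟨h1, h2⟩ := hk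
  obtain ⟨h3, h4⟩ := hk'
  have hpow : (p:ℝ)^(k+1) ≤ (p:ℝ)^k' := pow_le_pow_right₀ (le_of_lt hp1) (by omega)
  have : ((p:ℝ)^k')⁻¹ ≤ ((p:ℝ)^(k+1))⁻¹ := inv_anti₀ (by positivity) hpow
  linarith

lemma measurableSet_Apiece (p k : ℕ) : MeasurableSet (Apiece p k) := measurableSet_Ico

lemma vol_inter_Ioo_eq_Ico (E : Set ℝ) :
    volume (E ∩ Set.Ioo (0:ℝ) 1) = volume (E ∩ Set.Ico (0:ℝ) 1) := by
  apply le_antisymm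
  · exact measure_mono (Set.inter_subset_inter_right E Set.Ioo_subset_Ico_self)
  · have hsub : E ∩ Set.Ico (0:ℝ) 1 ⊆ (E ∩ Set.Ioo (0:ℝ) 1) ∪ {0} := by
      rintro u ⟨hE, h1, h2⟩
      rcases eq_or_lt_of_le h1 with h | h
      · right; simp [← h]
      · left; exact ⟨hE, h, h2⟩
    refine le_trans (measure_mono hsub) (le_trans (measure_union_le _ _) ?_)
    simp

lemma vol_inter_Ioc_eq_Ico (E : Set ℝ) :
    volume (E ∩ Set.Ioc (0:ℝ) 1) = volume (E ∩ Set.Ico (0:ℝ) 1) := by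
  rw [← vol_inter_Ioo_eq_Ico]
  apply le_antisymm
  · have hsub : E ∩ Set.Ioc (0:ℝ) 1 ⊆ (E ∩ Set.Ioo (0:ℝ) 1) ∪ {1} := by
      rintro u ⟨hE, h1, h2⟩
      rcases eq_or_lt_of_le h2 with h | h
      · right; simp [h]
      · left; exact ⟨hE, h1, h⟩
    refine le_trans (measure_mono hsub) (le_trans (measure_union_le _ _) ?_)
    simp
  · exact measure_mono (Set.inter_subset_inter_right E Set.Ioo_subset_Ioc_self)

lemma sR_preserves {p : ℕ} (hp : 2 ≤ p) {E : Set ℝ} (hE : MeasurableSet E) :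
    volume (sR p ⁻¹' E ∩ Set.Ico (0:ℝ) 1) = volume (E ∩ Set.Ico (0:ℝ) 1) := by
  have hmE : MeasurableSet (sR p ⁻¹' E) := (measurable_sR p) hE
  have hdecomp : sR p ⁻¹' E ∩ Set.Ico (0:ℝ) 1 = ⋃ k, (sR p ⁻¹' E ∩ Apiece p k) := by
    rw [← Set.inter_iUnion, Apiece_union hp]
  have hpiece : ∀ k, volume (sR p ⁻¹' E ∩ Apiece p k) = volume (E ∩ Bpiece p k) := by
    intro k
    set c : ℝ := -1 + ((p:ℝ)^k)⁻¹ + ((p:ℝ)^(k+1))⁻¹ with hc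
    have hA : sR p ⁻¹' E ∩ Apiece p k = (fun u => u + c) ⁻¹' (E ∩ Bpiece p k) := by
      ext u
      simp only [Set.mem_inter_iff, Set.mem_preimage]
      constructor
      · rintro ⟨hEu, hAu⟩
        have hu01 := Apiece_subset hp k hAu
        have hfn := (mem_Apiece_iff hp hu01 k).mp hAu
        have hsu : sR p u = u + c := by
          simp only [sR, hfn, hc]; ring
        refine ⟨by rw [← hsu]; exact hEu, ?_, ?_⟩
        · obtain ⟨h1, _⟩ := hAu
          simp only [hc]; linarith
        · obtain ⟨_, h2⟩ := hAu
          simp only [hc]; linarith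
      · rintro ⟨hEu, hB1, hB2⟩
        have hAu : u ∈ Apiece p k := by
          constructor
          · simp only [hc] at hB1; linarith
          · simp only [hc] at hB2; linarith
        have hu01 := Apiece_subset hp k hAu
        have hfn := (mem_Apiece_iff hp hu01 k).mp hAu
        have hsu : sR p u = u + c := by
          simp only [sR, hfn, hc]; ring
        exact ⟨by rw [hsu]; exact hEu, hAu⟩
    rw [hA]
    exact measure_preimage_add_right volume c (E ∩ Bpiece p k)
  rw [hdecomp, measure_iUnion (fun k k' hkk' => Disjoint.mono
      (Set.inter_subset_right) (Set.inter_subset_right) (Apiece_disjoint hp hkk'))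
      (fun k => hmE.inter (measurableSet_Apiece p k))]
  rw [tsum_congr hpiece]
  rw [← measure_iUnion (fun k k' hkk' => Disjoint.mono
      (Set.inter_subset_right) (Set.inter_subset_right) (Bpiece_disjoint hp hkk'))
      (fun k => hE.inter measurableSet_Ico)]
  rw [← Set.inter_iUnion, Bpiece_union hp]
  exact vol_inter_Ioo_eq_Ico E

lemma compl_preserves {E : Set ℝ} (hE : MeasurableSet E) :
    volume ((fun u : ℝ => 1 - u) ⁻¹' E ∩ Set.Ico (0:ℝ) 1) = volume (E ∩ Set.Ico (0:ℝ) 1) := by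
  have h1 : (fun u : ℝ => 1 - u) ⁻¹' E ∩ Set.Ico (0:ℝ) 1 =
      (fun u : ℝ => 1 - u) ⁻¹' (E ∩ Set.Ioc (0:ℝ) 1) := by
    ext u
    simp only [Set.mem_inter_iff, Set.mem_preimage, Set.mem_Ico, Set.mem_Ioc]
    constructor
    · rintro ⟨hE, h1, h2⟩; exact ⟨hE, by linarith, by linarith⟩
    · rintro ⟨hE, h1, h2⟩; exact ⟨hE, by linarith, by linarith⟩
  rw [h1]
  have h2 : ∀ S : Set ℝ, volume ((fun u : ℝ => 1 - u) ⁻¹' S) = volume S := by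
    intro S
    have hc : (fun u : ℝ => 1 - u) ⁻¹' S = Neg.neg ⁻¹' ((fun u : ℝ => u + 1) ⁻¹' S) := by
      ext u; simp [sub_eq_neg_add, add_comm]
    rw [hc, Set.neg_preimage, Measure.measure_neg, measure_preimage_add_right]
  rw [h2, vol_inter_Ioc_eq_Ico]

lemma sR_iter_preserves {p : ℕ} (hp : 2 ≤ p) (n : ℕ) {E : Set ℝ} (hE : MeasurableSet E) :
    volume ((sR p)^[n] ⁻¹' E ∩ Set.Ico (0:ℝ) 1) = volume (E ∩ Set.Ico (0:ℝ) 1) := by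
  induction n generalizing E with
  | zero => simp
  | succ n ih =>
    have hstep : ((sR p)^[n+1]) ⁻¹' E = sR p ⁻¹' ((sR p)^[n] ⁻¹' E) := by
      ext u
      simp [Function.iterate_succ_apply]
    rw [hstep, sR_preserves hp (((measurable_sR p).iterate n) hE), ih hE]

lemma rR_preserves {p : ℕ} (hp : 2 ≤ p) (m : ℕ) {E : Set ℝ} (hE : MeasurableSet E) :
    volume ((fun u : ℝ => 1 - (sR p)^[m] u) ⁻¹' E ∩ Set.Ico (0:ℝ) 1) =
    volume (E ∩ Set.Ico (0:ℝ) 1) := by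
  have h1 : (fun u : ℝ => 1 - (sR p)^[m] u) ⁻¹' E =
      (sR p)^[m] ⁻¹' ((fun u : ℝ => 1 - u) ⁻¹' E) := by
    ext u; simp
  have hmeas : Measurable (fun u : ℝ => 1 - u) := measurable_const.sub measurable_id
  rw [h1, sR_iter_preserves hp m (hmeas hE), compl_preserves hE]

/-! ### Qset invariance -/

lemma sR_notin_Qset {p : ℕ} (hp : 2 ≤ p) {u : ℝ} (hu : u ∈ Set.Ico (0:ℝ) 1)
    (hq : u ∉ Qset p) : sR p u ∉ Qset p := by
  rintro ⟨n, z, hz⟩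
  set k := firstNot p (digitsOf p u) with hk
  have hppos : (0:ℝ) < p := by exact_mod_cast (by omega : 0 < p)
  have hpne : (p:ℝ) ≠ 0 := ne_of_gt hppos
  apply hq
  refine ⟨n + k + 1, z * (p:ℤ)^(k+1) + (p:ℤ)^(n+k+1) - (p:ℤ)^(n+1) - (p:ℤ)^n, ?_⟩
  have hsu : (u - 1 + ((p:ℝ)^k)⁻¹ + ((p:ℝ)^(k+1))⁻¹) * (p:ℝ)^n = z := by
    rw [← hz]; simp only [sR, ← hk]
  have e1 : ((p:ℝ)^k)⁻¹ * (p:ℝ)^(n+k+1) = (p:ℝ)^(n+1) := by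
    rw [show (p:ℝ)^(n+k+1) = (p:ℝ)^k * (p:ℝ)^(n+1) by rw [← pow_add]; ring_nf]
    exact inv_mul_cancel_left₀ (pow_ne_zero _ hpne) _
  have e2 : ((p:ℝ)^(k+1))⁻¹ * (p:ℝ)^(n+k+1) = (p:ℝ)^n := by
    rw [show (p:ℝ)^(n+k+1) = (p:ℝ)^(k+1) * (p:ℝ)^n by rw [← pow_add]; ring_nf]
    exact inv_mul_cancel_left₀ (pow_ne_zero _ hpne) _
  push_cast
  linear_combination (p:ℝ)^(k+1) * hsu - e1 - e2

lemma sR_iter_pack {p : ℕ} (hp : 2 ≤ p) {u : ℝ} (hu : u ∈ Set.Ico (0:ℝ) 1) (n : ℕ) :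
    (sR p)^[n] u ∈ Set.Ico (0:ℝ) 1 ∧
    digitsOf p ((sR p)^[n] u) = (odo p)^[n] (digitsOf p u) ∧
    (u ∉ Qset p → (sR p)^[n] u ∉ Qset p) := by
  induction n with
  | zero => exact ⟨hu, rfl, id⟩
  | succ n ih =>
    obtain ⟨h1, h2, h3⟩ := ih
    rw [Function.iterate_succ_apply', Function.iterate_succ_apply']
    exact ⟨sR_mem01 hp h1, by rw [sR_digits hp h1, h2],
      fun hq => sR_notin_Qset hp h1 (h3 hq)⟩


lemma lam_apply (p : ℕ) {S : Set (ℕ → ℕ)} (hS : MeasurableSet S) :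
    lam p S = volume (digitsOf p ⁻¹' S ∩ Set.Ico (0:ℝ) 1) := by
  rw [lam, Measure.map_apply (measurable_digitsOf p) hS,
    Measure.restrict_apply ((measurable_digitsOf p) hS)]

lemma pim_eq (p m j : ℕ) :
    pim p m j = volume (digitsOf p ⁻¹' {x | phiSum p m x = j} ∩ Set.Ico (0:ℝ) 1) :=
  lam_apply p ((measurable_phiSum p m) (measurableSet_singleton j))

lemma pim_eq_zero_of_gt {p : ℕ} (hp : 2 ≤ p) {m j : ℕ} (hj : (p-2)*m < j) :
    pim p m j = 0 := by
  rw [pim_eq]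
  have hempty : digitsOf p ⁻¹' {x | phiSum p m x = j} ∩ Set.Ico (0:ℝ) 1 = ∅ := by
    rw [Set.eq_empty_iff_forall_notMem]
    rintro u ⟨hval, hu⟩
    have := phiSum_le hp (digits_mem_gammaStar hp hu) m
    rw [Set.mem_preimage, Set.mem_setOf_eq] at hval
    omega
  rw [hempty]
  exact measure_empty

lemma pim_exists_ne_zero {p : ℕ} (hp : 2 ≤ p) (m : ℕ) : ∃ j, pim p m j ≠ 0 := by
  by_contra hall
  push_neg at hall
  have hsub : Set.Ico (0:ℝ) 1 ⊆
      ⋃ j, (digitsOf p ⁻¹' {x | phiSum p m x = j} ∩ Set.Ico (0:ℝ) 1) := by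
    intro u hu
    exact Set.mem_iUnion.mpr ⟨phiSum p m (digitsOf p u), rfl, hu⟩
  have hle : volume (Set.Ico (0:ℝ) 1) ≤
      ∑' j, volume (digitsOf p ⁻¹' {x | phiSum p m x = j} ∩ Set.Ico (0:ℝ) 1) :=
    le_trans (measure_mono hsub) (measure_iUnion_le _)
  have hzero : ∀ j, volume (digitsOf p ⁻¹' {x | phiSum p m x = j} ∩ Set.Ico (0:ℝ) 1) = 0 := by
    intro j
    rw [← pim_eq]
    exact hall j
  rw [tsum_congr hzero] at hle
  simp [Real.volume_Ico] at hle

lemma pim_symm {p : ℕ} (hp : 3 ≤ p) {m j : ℕ} (hj : j ≤ (p-2)*m) :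
    pim p m ((p-2)*m - j) = pim p m j := by
  have hp2 : 2 ≤ p := by omega
  set M := (p-2)*m with hM
  set rR : ℝ → ℝ := fun u => 1 - (sR p)^[m] u with hrR
  set G : ℕ → Set ℝ := fun i => digitsOf p ⁻¹' {x | phiSum p m x = i} with hG
  have hGmeas : ∀ i, MeasurableSet (G i) := fun i =>
    (measurable_digitsOf p) ((measurable_phiSum p m) (measurableSet_singleton i))
  -- a.e. identification
  have hae : ∀ u ∈ Set.Ico (0:ℝ) 1, u ∉ Qset p →
      (u ∈ G (M - j) ↔ u ∈ rR ⁻¹' (G j)) := by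
    intro u hu hq
    obtain ⟨hv01, hvdig, hvq⟩ := sR_iter_pack hp2 hu m
    set v := (sR p)^[m] u with hv
    have hvq' : v ∉ Qset p := hvq hq
    have hv0 : v ≠ 0 := by
      intro h0
      exact hvq' ⟨0, 0, by rw [h0]; simp⟩
    have hvIoo : v ∈ Set.Ioo (0:ℝ) 1 :=
      ⟨lt_of_le_of_ne hv01.1 (Ne.symm hv0), hv01.2⟩
    have hrdig : digitsOf p (rR u) = Tseq p ((odo p)^[m] (digitsOf p u)) := by
      show digitsOf p (1 - v) = _
      rw [compl_digits hp2 hvIoo hvq', hvdig]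
    have hx : digitsOf p u ∈ GammaStar p := digits_mem_gammaStar hp2 hu
    have hkey := key4 hp2 hx m
    have hble := phiSum_le hp2 hx m
    simp only [hG, Set.mem_preimage, Set.mem_setOf_eq, hrdig]
    omega
  -- replace by symmetric-difference null sets
  have hQnull : volume (Qset p) = 0 :=
    Set.Countable.measure_zero (countable_Qset (by omega)) volume
  have hcongr : volume (G (M - j) ∩ Set.Ico (0:ℝ) 1) =
      volume (rR ⁻¹' (G j) ∩ Set.Ico (0:ℝ) 1) := by
    apply measure_congr
    rw [Filter.eventuallyEq_set]
    apply Filter.Eventually.mono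
      (measure_eq_zero_iff_ae_notMem.mp hQnull)
    intro u hq
    simp only [Set.mem_inter_iff]
    constructor
    · rintro ⟨h1, h2⟩
      exact ⟨(hae u h2 hq).mp h1, h2⟩
    · rintro ⟨h1, h2⟩
      exact ⟨(hae u h2 hq).mpr h1, h2⟩
  rw [pim_eq, pim_eq]
  exact hcongr.trans (rR_preserves hp2 m (hGmeas j))

/-- `D_m + d_m = (p-2) m` for every `m ≥ 0`; equivalently the
mid-degree `δ_m = (D_m + d_m)/2` equals `(p-2) m / 2`. -/
theorem statement_19 (p : ℕ) (hp : 3 ≤ p) (m : ℕ) :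
    D p m + d p m = (p - 2) * m ∧
    ((D p m : ℝ) + (d p m : ℝ)) / 2 = ((p : ℝ) - 2) * m / 2 := by
  have hp2 : 2 ≤ p := by omega
  set M := (p - 2) * m with hM
  set N : Set ℕ := {j | pim p m j ≠ 0} with hN
  have hub : ∀ j ∈ N, j ≤ M := by
    intro j hj
    by_contra h
    exact hj (pim_eq_zero_of_gt hp2 (by omega))
  have hne : N.Nonempty := pim_exists_ne_zero hp2 m
  have hbdd : BddAbove N := ⟨M, hub⟩
  have hdN : d p m ∈ N := Nat.sInf_mem hne
  have hDN : D p m ∈ N := Nat.sSup_mem hne hbdd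
  have hsym : ∀ j ∈ N, M - j ∈ N := by
    intro j hj
    have := pim_symm hp (hub j hj)
    simp only [hN, Set.mem_setOf_eq] at hj ⊢
    rw [this]
    exact hj
  have h1 : M - d p m ≤ D p m := le_csSup hbdd (hsym _ hdN)
  have h2 : d p m ≤ M - D p m := Nat.sInf_le (hsym _ hDN)
  have h3 : d p m ≤ M := hub _ hdN
  have h4 : D p m ≤ M := hub _ hDN
  have hmain : D p m + d p m = M := by omega
  refine ⟨hmain, ?_⟩
  have hcast : (D p m : ℝ) + (d p m : ℝ) = ((p:ℝ) - 2) * m := by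
    have : ((D p m + d p m : ℕ) : ℝ) = ((M : ℕ) : ℝ) := by rw [hmain]
    push_cast at this
    rw [hM] at this
    push_cast [Nat.cast_sub hp2] at this
    linarith
  linarith

end Chacon
end
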